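/- arXiv:2203.16679 — 3 statements merged into one kernel-verified Lean document; each statement's English description precedes it below -/
import Mathlib

section
/- Let f: X → Y be a morphism of rank n in a cubical category C. Then every object (X → Z → Y) of Fac(f) lies on a chain of n rank-1 morphisms from the initial object to the terminal object of Fac(f); that is, there are objects Z_n = X, Z_{n−1}, …, Z_1, Z_0 = Y of C, with Z among them, and morphisms Z_j → Z_{j−1} of rank 1 in C composing to f, each Z_j giving a factorization of f, with rk Z_j = rk Y + j. In particular, every morphism of rank n in a cubical category factors as a composition of n rank-1 morphisms. -/
open CategoryTheory

/-- The `n`-cube category: subsets of `{1,…,n}` with inclusions as morphisms. -/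
def CubeCat (n : ℕ) : Type := Finset (Fin n)

instance (n : ℕ) : Category (CubeCat n) :=
  inferInstanceAs (Category (Finset (Fin n)))

/-- The rank of an object of the `n`-cube category: the size of its complement. -/
def cubeRank {n : ℕ} (S : CubeCat n) : ℤ := (n : ℤ) - (S : Finset (Fin n)).card

/-- `t : X ⟶ A` is a first factor of `f : X ⟶ Y` (with respect to the rank function `rk`)
if it has rank 1 and can be completed to a factorization `X → A → Y` of `f`. -/
def IsFirstFactor {C : Type*} [Category C] (rk : C → ℤ) {X Y A : C}
    (f : X ⟶ Y) (t : X ⟶ A) : Prop :=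
  rk X - rk A = 1 ∧ ∃ s : A ⟶ Y, t ≫ s = f

/-- `t : B ⟶ Y` is a last factor of `f : X ⟶ Y` (with respect to the rank function `rk`)
if it has rank 1 and can be completed to a factorization `X → B → Y` of `f`. -/
def IsLastFactor {C : Type*} [Category C] (rk : C → ℤ) {X Y B : C}
    (f : X ⟶ Y) (t : B ⟶ Y) : Prop :=
  rk B - rk Y = 1 ∧ ∃ s : X ⟶ B, s ≫ t = f

/-- A cubical category: a category equipped with a rank function on objects (the rank
of a morphism `f : X ⟶ Y` being `rk X - rk Y`) such that:
(1) all morphisms have nonnegative rank, and rank 0 happens only for identities;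
(2) the factorization category of a rank `n` morphism is isomorphic to the `n`-cube
category, and the middle object functor is an embedding;
(3) a morphism is uniquely determined by its first factors;
(4) a morphism is uniquely determined by its last factors. -/
structure IsCubical (C : Type*) [Category C] (rk : C → ℤ) : Prop where
  rank_nonneg : ∀ {X Y : C} (_ : X ⟶ Y), rk Y ≤ rk X
  rank_zero : ∀ {X Y : C} (f : X ⟶ Y), rk X = rk Y → ∃ h : X = Y, f = eqToHom h
  fac_cube : ∀ {X Y : C} (f : X ⟶ Y),
    ∃ F : CubeCat (rk X - rk Y).toNat ⥤ Factorisation f,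
      F.Full ∧ F.Faithful ∧ Function.Bijective F.obj
  mid_embed_obj : ∀ {X Y : C} (f : X ⟶ Y),
    Function.Injective (fun Z : Factorisation f => Z.mid)
  mid_embed_map : ∀ {X Y : C} (f : X ⟶ Y) {Z Z' : Factorisation f} (g g' : Z ⟶ Z'),
    g.h = g'.h → g = g'
  first_det : ∀ {X Y : C} (f g : X ⟶ Y),
    (∀ (A : C) (t : X ⟶ A), IsFirstFactor rk f t ↔ IsFirstFactor rk g t) → f = g
  last_det : ∀ {X Y : C} (f g : X ⟶ Y),
    (∀ (B : C) (t : B ⟶ Y), IsLastFactor rk f t ↔ IsLastFactor rk g t) → f = g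
/-- The composite of a chain of `n` composable morphisms `obj 0 ⟶ obj 1 ⟶ ⋯ ⟶ obj n`. -/
def chainComp {C : Type*} [Category C] : ∀ {n : ℕ} (obj : Fin (n + 1) → C)
    (_ : ∀ j : Fin n, obj j.castSucc ⟶ obj j.succ), obj 0 ⟶ obj (Fin.last n)
  | 0, obj, _ => eqToHom (congrArg obj (by ext; simp : (0 : Fin 1) = Fin.last 0))
  | n + 1, obj, mor =>
    eqToHom (congrArg obj (by ext; simp : (0 : Fin (n + 2)) = (0 : Fin (n + 1)).castSucc)) ≫
      chainComp (fun i : Fin (n + 1) => obj i.castSucc)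
        (fun j => mor j.castSucc ≫ eqToHom (congrArg obj (Fin.succ_castSucc j))) ≫
      mor (Fin.last n) ≫ eqToHom (congrArg obj (Fin.succ_last n))

/-! ### Auxiliary definitions and lemmas for `stmt3` -/

/-- A position function for a subset `S` of `Fin n`: a bijection `Fin n → Fin n` (viewed
as `ℕ`-valued) sending `S` exactly to the positions `< S.card`. -/
noncomputable def cpos {n : ℕ} (S : Finset (Fin n)) (i : Fin n) : ℕ :=
  if h : i ∈ S then (S.equivFin ⟨i, h⟩ : Fin S.card).val
  else S.card + ((Sᶜ.equivFin ⟨i, Finset.mem_compl.mpr h⟩ : Fin Sᶜ.card)).val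

lemma card_compl_aux {n : ℕ} (S : Finset (Fin n)) : S.card + Sᶜ.card = n := by
  have h1 : Sᶜ.card = Fintype.card (Fin n) - S.card := Finset.card_compl S
  have h2 : S.card ≤ Finset.univ.card := Finset.card_le_card (Finset.subset_univ S)
  rw [Finset.card_univ, Fintype.card_fin] at h2
  rw [Fintype.card_fin] at h1
  omega

lemma cpos_lt {n : ℕ} (S : Finset (Fin n)) (i : Fin n) : cpos S i < n := by
  have hc := card_compl_aux S
  unfold cpos
  split
  · rename_i h
    have := (S.equivFin ⟨i, h⟩).isLt
    omega
  · rename_i h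
    have := (Sᶜ.equivFin ⟨i, Finset.mem_compl.mpr h⟩).isLt
    omega

lemma cpos_lt_card_iff {n : ℕ} (S : Finset (Fin n)) (i : Fin n) :
    cpos S i < S.card ↔ i ∈ S := by
  unfold cpos
  split
  · rename_i h
    exact iff_of_true ((S.equivFin ⟨i, h⟩).isLt) h
  · rename_i h
    exact iff_of_false (by omega) h

lemma cpos_inj {n : ℕ} (S : Finset (Fin n)) : Function.Injective (cpos S) := by
  intro i j hij
  unfold cpos at hij
  split at hij <;> split at hij
  · have := S.equivFin.injective (Fin.val_injective hij)
    exact Subtype.ext_iff.mp this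
  · rename_i hi hj
    exact absurd hij (by have := (S.equivFin ⟨i, hi⟩).isLt; omega)
  · rename_i hi hj
    exact absurd hij (by have := (S.equivFin ⟨j, hj⟩).isLt; omega)
  · rename_i hi hj
    have h' : (Sᶜ.equivFin ⟨i, Finset.mem_compl.mpr hi⟩ : Fin Sᶜ.card).val
        = (Sᶜ.equivFin ⟨j, Finset.mem_compl.mpr hj⟩ : Fin Sᶜ.card).val := by omega
    have := Sᶜ.equivFin.injective (Fin.val_injective h')
    exact Subtype.ext_iff.mp this

lemma cpos_surj {n : ℕ} (S : Finset (Fin n)) (k : ℕ) (hk : k < n) :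
    ∃ i, cpos S i = k := by
  have hbij : Function.Bijective (fun i : Fin n => (⟨cpos S i, cpos_lt S i⟩ : Fin n)) := by
    rw [Fintype.bijective_iff_injective_and_card]
    exact ⟨fun i j h => cpos_inj S (by simpa [Fin.ext_iff] using h), rfl⟩
  obtain ⟨i, hi⟩ := hbij.2 ⟨k, hk⟩
  exact ⟨i, by simpa [Fin.ext_iff] using hi⟩

/-- The descending chain of subsets of `Fin n` through `S` determined by `cpos S`. -/
noncomputable def chainSet {n : ℕ} (S : Finset (Fin n)) (j : ℕ) : Finset (Fin n) :=
  Finset.univ.filter (fun i => cpos S i < n - j)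

lemma mem_chainSet {n : ℕ} {S : Finset (Fin n)} {j : ℕ} {i : Fin n} :
    i ∈ chainSet S j ↔ cpos S i < n - j := by simp [chainSet]

lemma chainSet_anti {n : ℕ} (S : Finset (Fin n)) {j j' : ℕ} (h : j ≤ j') :
    chainSet S j' ⊆ chainSet S j := by
  intro i hi
  rw [mem_chainSet] at *
  omega

lemma chainSet_self {n : ℕ} (S : Finset (Fin n)) : chainSet S n = ∅ := by
  ext i; rw [mem_chainSet]; simp

lemma chainSet_eq_self {n : ℕ} (S : Finset (Fin n)) (hS : S.card ≤ n) :
    chainSet S (n - S.card) = S := by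
  ext i
  rw [mem_chainSet, Nat.sub_sub_self hS]
  exact cpos_lt_card_iff S i

lemma chainSet_ne {n : ℕ} (S : Finset (Fin n)) {j : ℕ} (h : j < n) :
    chainSet S (j + 1) ≠ chainSet S j := by
  obtain ⟨i, hi⟩ := cpos_surj S (n - j - 1) (by omega)
  intro hEq
  have h1 : i ∈ chainSet S j := by rw [mem_chainSet]; omega
  have h2 : i ∉ chainSet S (j + 1) := by rw [mem_chainSet]; omega
  rw [hEq] at h2
  exact h2 h1

/-- A `Finset (Fin n)` viewed as an object of the cube category. -/
def toCube {n : ℕ} (S : Finset (Fin n)) : CubeCat n := S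

/-- An inclusion of subsets as a morphism of the cube category. -/
def cubeHom {n : ℕ} {S T : Finset (Fin n)} (h : S ⊆ T) : toCube S ⟶ toCube T := ⟨⟨h⟩⟩

lemma chain_rank {n : ℕ} (g : Fin (n + 1) → ℤ)
    (h1 : ∀ j : Fin n, 1 ≤ g j.succ - g j.castSucc)
    (h2 : g (Fin.last n) - g 0 = n) :
    ∀ j : Fin (n + 1), g j = g 0 + (j : ℕ) := by
  have gcongr : ∀ (a : ℕ) (pa : a < n + 1) (b : Fin (n + 1)), a = b.val → g ⟨a, pa⟩ = g b := by
    intro a pa b h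
    cases b with
    | mk bv pb => cases h; rfl
  have key : ∀ d k, k + d ≤ n → ∀ (p : k + d < n + 1) (q : k < n + 1),
      (d : ℤ) ≤ g ⟨k + d, p⟩ - g ⟨k, q⟩ := by
    intro d
    induction d with
    | zero => intro k h p q; simp
    | succ d ih =>
      intro k h p q
      have h' := ih k (by omega) (by omega) q
      have h2' : 1 ≤ g ⟨k + (d + 1), p⟩ - g ⟨k + d, by omega⟩ :=
        h1 ⟨k + d, by omega⟩
      push_cast
      linarith
  intro j
  have ha := key j.val 0 (by omega) (by omega) (by omega)
  have hb := key (n - j.val) j.val (by omega) (by omega) (by omega)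
  have e1 : g ⟨0 + j.val, by omega⟩ = g j := gcongr _ _ _ (by omega)
  have e2 : g ⟨0, by omega⟩ = g 0 := gcongr _ _ _ (by simp)
  have e3 : g ⟨j.val + (n - j.val), by omega⟩ = g (Fin.last n) := gcongr _ _ _ (by
    simp [Fin.last]; omega)
  have e4 : g ⟨j.val, by omega⟩ = g j := gcongr _ _ _ rfl
  rw [e1, e2] at ha
  rw [e3, e4] at hb
  have hc : ((n - j.val : ℕ) : ℤ) = (n : ℤ) - (j.val : ℤ) := by
    have := j.isLt; omega
  rw [hc] at hb
  linarith

lemma eqToHom_comp_fun {C : Type*} [Category C] {ι : Sort*} {Y : C} (obj : ι → C)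
    (π : ∀ i, obj i ⟶ Y) {a b : ι} (h : a = b) (e : obj a = obj b) :
    eqToHom e ≫ π b = π a := by subst h; simp

lemma chainComp_pi {C : Type*} [Category C] {Y : C} : ∀ {n : ℕ} (obj : Fin (n + 1) → C)
    (mor : ∀ j : Fin n, obj j.castSucc ⟶ obj j.succ)
    (π : ∀ i, obj i ⟶ Y)
    (_ : ∀ j : Fin n, mor j ≫ π j.succ = π j.castSucc),
    chainComp obj mor ≫ π (Fin.last n) = π 0
  | 0, obj, mor, π, hπ => by
    rw [chainComp]
    exact eqToHom_comp_fun obj π (by ext; simp : (0 : Fin 1) = Fin.last 0) _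
  | n + 1, obj, mor, π, hπ => by
    rw [chainComp]
    simp only [Category.assoc]
    rw [eqToHom_comp_fun obj π (Fin.succ_last n) _, hπ (Fin.last n)]
    rw [chainComp_pi (fun i : Fin (n+1) => obj i.castSucc)
      (fun j => mor j.castSucc ≫ eqToHom (congrArg obj (Fin.succ_castSucc j)))
      (fun i => π i.castSucc)
      (fun j => by
        simp only [Category.assoc]
        rw [eqToHom_comp_fun obj π (Fin.succ_castSucc j) _]
        exact hπ j.castSucc)]
    exact eqToHom_comp_fun obj π (by ext; simp : (0 : Fin (n + 2)) = (0 : Fin (n + 1)).castSucc) _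

lemma fac_pi_congr {C : Type*} [Category C] {X Y : C} {f : X ⟶ Y}
    {W W' : Factorisation f} (h : W = W') :
    W.π = eqToHom (congrArg Factorisation.mid h) ≫ W'.π := by subst h; simp

/-- Every object of `Fac(f)`, for `f : X ⟶ Y` of rank `n` in a cubical
category, lies on a chain of `n` rank-1 morphisms from the initial object to the terminal
object of `Fac(f)`; the object `Z_j` of the chain has rank `rk Y + j`.  In particular,
every morphism of rank `n` in a cubical category factors as a composition of `n` rank-1
morphisms. -/
theorem stmt3 {C : Type*} [Category C] (rk : C → ℤ) (hC : IsCubical C rk)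
    {X Y : C} (f : X ⟶ Y) (n : ℕ) (hn : (n : ℤ) = rk X - rk Y) (Z : Factorisation f) :
    (∃ (c : Fin (n + 1) → Factorisation f)
        (_ : ∀ j : Fin n, c j.succ ⟶ c j.castSucc),
      c (Fin.last n) = ({ mid := X, ι := 𝟙 X, π := f, ι_π := Category.id_comp f } :
          Factorisation f) ∧
      c 0 = ({ mid := Y, ι := f, π := 𝟙 Y, ι_π := Category.comp_id f } : Factorisation f) ∧
      (∃ k : Fin (n + 1), c k = Z) ∧
      (∀ j : Fin (n + 1), rk (c j).mid = rk Y + (j : ℕ)) ∧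
      (∀ j : Fin n, rk (c j.succ).mid - rk (c j.castSucc).mid = 1)) ∧
    (∃ (obj : Fin (n + 1) → C) (mor : ∀ j : Fin n, obj j.castSucc ⟶ obj j.succ)
        (h0 : obj 0 = X) (hl : obj (Fin.last n) = Y),
      (∀ j : Fin n, rk (obj j.castSucc) - rk (obj j.succ) = 1) ∧
      eqToHom h0.symm ≫ chainComp obj mor ≫ eqToHom hl = f) := by
  have hm : n = (rk X - rk Y).toNat := by omega
  subst hm
  set m := (rk X - rk Y).toNat with hmdef
  obtain ⟨F, hFull, hFaith, hbij⟩ := hC.fac_cube f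
  obtain ⟨SZ, hSZ⟩ := hbij.2 Z
  set SZ' : Finset (Fin m) := SZ with hSZ'
  have hSZ2 : F.obj (toCube SZ') = Z := hSZ
  have hcard : SZ'.card ≤ m := by
    have := Finset.card_le_card (Finset.subset_univ SZ')
    rwa [Finset.card_univ, Fintype.card_fin] at this
  -- the chain of factorisations
  set c : Fin (m + 1) → Factorisation f := fun j => F.obj (toCube (chainSet SZ' (j : ℕ)))
    with hcdef
  have hom : ∀ j : Fin m, c j.succ ⟶ c j.castSucc := fun j =>
    F.map (cubeHom (chainSet_anti SZ' (by
      simp only [Fin.val_succ, Fin.coe_castSucc]; omega :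
      ((j.castSucc : Fin (m+1)) : ℕ) ≤ ((j.succ : Fin (m+1)) : ℕ))))
  -- endpoints
  have hclast : c (Fin.last m) = (Factorisation.initial : Factorisation f) := by
    obtain ⟨S0, hS0⟩ := hbij.2 (Factorisation.initial : Factorisation f)
    have hsub0 : chainSet SZ' ((Fin.last m : Fin (m+1)) : ℕ) ⊆ S0 := by
      rw [Fin.val_last, chainSet_self]
      exact Finset.empty_subset _
    have w : c (Fin.last m) ⟶ (Factorisation.initial : Factorisation f) :=
      F.map (cubeHom hsub0) ≫ eqToHom hS0
    have v : (Factorisation.initial : Factorisation f) ⟶ c (Fin.last m) :=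
      Factorisation.initialHom _
    have hr1 : rk X ≤ rk (c (Fin.last m)).mid := hC.rank_nonneg w.h
    have hr2 : rk (c (Fin.last m)).mid ≤ rk X := hC.rank_nonneg v.h
    obtain ⟨hmid, -⟩ := hC.rank_zero w.h (le_antisymm hr2 hr1)
    exact hC.mid_embed_obj f hmid
  have hc0 : c 0 = (Factorisation.terminal : Factorisation f) := by
    obtain ⟨S1, hS1⟩ := hbij.2 (Factorisation.terminal : Factorisation f)
    set S1' : Finset (Fin m) := S1 with hS1'def
    have hS1'' : F.obj (toCube S1') = (Factorisation.terminal : Factorisation f) := hS1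
    have hsub1 : S1' ⊆ chainSet SZ' ((0 : Fin (m+1)) : ℕ) := by
      intro i _
      rw [mem_chainSet]
      have := cpos_lt SZ' i
      simp
      omega
    have w : (Factorisation.terminal : Factorisation f) ⟶ c 0 :=
      eqToHom hS1''.symm ≫ F.map (cubeHom hsub1)
    have v : c 0 ⟶ (Factorisation.terminal : Factorisation f) :=
      Factorisation.terminalHom _
    have hr1 : rk Y ≤ rk (c 0).mid := hC.rank_nonneg v.h
    have hr2 : rk (c 0).mid ≤ rk Y := hC.rank_nonneg w.h
    obtain ⟨hmid, -⟩ := hC.rank_zero v.h (le_antisymm hr2 hr1)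
    exact hC.mid_embed_obj f hmid
  -- steps are at least rank 1
  have hstep : ∀ j : Fin m, 1 ≤ rk (c j.succ).mid - rk (c j.castSucc).mid := by
    intro j
    have hle : rk (c j.castSucc).mid ≤ rk (c j.succ).mid := hC.rank_nonneg (hom j).h
    by_contra hlt
    push_neg at hlt
    have heq : rk (c j.succ).mid = rk (c j.castSucc).mid := by omega
    obtain ⟨hmid, -⟩ := hC.rank_zero (hom j).h heq
    have hcc : c j.succ = c j.castSucc := hC.mid_embed_obj f hmid
    have hTT : chainSet SZ' ((j.succ : Fin (m+1)) : ℕ)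
        = chainSet SZ' ((j.castSucc : Fin (m+1)) : ℕ) := hbij.1 hcc
    rw [Fin.val_succ, Fin.coe_castSucc] at hTT
    exact chainSet_ne SZ' j.isLt hTT
  -- exact ranks
  have hlaststep : rk (c (Fin.last m)).mid - rk (c 0).mid = (m : ℤ) := by
    rw [hclast, hc0]
    show rk X - rk Y = (m : ℤ)
    omega
  have hrank : ∀ j : Fin (m + 1), rk (c j).mid = rk Y + (j : ℕ) := by
    have h0' : rk (c 0).mid = rk Y := by rw [hc0]; rfl
    intro j
    rw [chain_rank (fun j => rk (c j).mid) hstep hlaststep j, h0']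
  have hstep1 : ∀ j : Fin m, rk (c j.succ).mid - rk (c j.castSucc).mid = 1 := by
    intro j
    rw [hrank j.succ, hrank j.castSucc, Fin.val_succ, Fin.coe_castSucc]
    push_cast
    ring
  constructor
  · -- part 1
    refine ⟨c, hom, hclast, hc0, ⟨⟨m - SZ'.card, by omega⟩, ?_⟩, hrank, hstep1⟩
    show F.obj (toCube (chainSet SZ' (m - SZ'.card))) = Z
    rw [chainSet_eq_self SZ' hcard]
    exact hSZ2
  · -- part 2
    have hA : (c (Fin.rev (0 : Fin (m+1)))).mid = X := by rw [Fin.rev_zero, hclast]; rfl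
    have hB : (c ((Fin.last m).rev)).mid = Y := by rw [Fin.rev_last, hc0]; rfl
    refine ⟨fun i => (c i.rev).mid,
      fun j => eqToHom (show (c j.castSucc.rev).mid = (c j.rev.succ).mid by
          rw [Fin.rev_castSucc]) ≫
        (hom j.rev).h ≫ eqToHom (show (c j.rev.castSucc).mid = (c j.succ.rev).mid by
          rw [Fin.rev_succ]),
      hA, hB, ?_, ?_⟩
    · intro j
      show rk (c j.castSucc.rev).mid - rk (c j.succ.rev).mid = 1
      rw [Fin.rev_castSucc, Fin.rev_succ]
      exact hstep1 j.rev
    · have hπ : ∀ j : Fin m,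
          (eqToHom (show (c j.castSucc.rev).mid = (c j.rev.succ).mid by
            rw [Fin.rev_castSucc]) ≫
          (hom j.rev).h ≫ eqToHom (show (c j.rev.castSucc).mid = (c j.succ.rev).mid by
            rw [Fin.rev_succ])) ≫ (c j.succ.rev).π = (c j.castSucc.rev).π := by
        intro j
        simp only [Category.assoc]
        rw [eqToHom_comp_fun (fun k : Fin (m+1) => (c k).mid) (fun k => (c k).π)
          (Fin.rev_succ j).symm _]
        rw [(hom j.rev).h_π]
        rw [eqToHom_comp_fun (fun k : Fin (m+1) => (c k).mid) (fun k => (c k).π)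
          (Fin.rev_castSucc j) _]
      have main := chainComp_pi (fun i : Fin (m+1) => (c i.rev).mid) _
        (fun i => (c i.rev).π) hπ
      beta_reduce at main
      have hW1 : c ((Fin.last m).rev) = (Factorisation.terminal : Factorisation f) := by
        rw [Fin.rev_last]; exact hc0
      have hW2 : c (Fin.rev (0 : Fin (m+1))) = (Factorisation.initial : Factorisation f) := by
        rw [Fin.rev_zero]; exact hclast
      rw [fac_pi_congr hW1, fac_pi_congr hW2] at main
      simp only [Factorisation.terminal_π, Factorisation.initial_π, Factorisation.terminal_mid, Factorisation.initial_mid, Category.comp_id] at main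
      have main2 : chainComp (fun i : Fin (m+1) => (c i.rev).mid)
          (fun j => eqToHom (show (c j.castSucc.rev).mid = (c j.rev.succ).mid by
              rw [Fin.rev_castSucc]) ≫
            (hom j.rev).h ≫ eqToHom (show (c j.rev.castSucc).mid = (c j.succ.rev).mid by
              rw [Fin.rev_succ])) ≫ eqToHom hB = eqToHom hA ≫ f := by
          rw [← Category.comp_id (eqToHom hB)]; exact main
      rw [main2]
      rw [← Category.assoc, eqToHom_trans, eqToHom_refl, Category.id_comp]
end

section
/- Let Λ be a finite-dimensional hereditary algebra of finite representation type over a field. Let M_1, …, M_k be exceptional Λ-modules that are pairwise Hom-orthogonal and such that for each pair i ≠ j, at least one of (M_i, M_j) and (M_j, M_i) is an exceptional pair (equivalently, Ext^1_Λ vanishes in at least one direction between M_i and M_j). Then there is a permutation σ of {1,…,k} such that (M_{σ(1)}, …, M_{σ(k)}) is an exceptional sequence. -/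
open CategoryTheory

/-- `Hom_Λ(A,B) = 0`. -/
def homZero {Λ : Type} [Ring Λ] (A B : ModuleCat.{0} Λ) : Prop := ∀ f : A ⟶ B, f = 0

/-- `Ext¹_Λ(A,B) = 0`, phrased as: every short exact sequence `0 → B → E → A → 0` splits. -/
def ext1Zero {Λ : Type} [Ring Λ] (A B : ModuleCat.{0} Λ) : Prop :=
  ∀ (E : ModuleCat.{0} Λ) (i : B ⟶ E) (p : E ⟶ A),
    Function.Injective i → Function.Surjective p → LinearMap.range i.hom = LinearMap.ker p.hom →
      ∃ s : A ⟶ E, s ≫ p = 𝟙 A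

/-- A module is exceptional if it is finite dimensional, rigid (`Ext¹(E,E)=0`) and a brick
(its endomorphism ring is a division algebra). -/
def IsExceptional {Λ : Type} [Ring Λ] (M : ModuleCat.{0} Λ) : Prop :=
  Module.Finite Λ M ∧ ext1Zero M M ∧ ((0 : End M) ≠ 1) ∧ ∀ f : End M, f ≠ 0 → IsUnit f

/-- `(A, B)` is an exceptional pair: both are exceptional and `Hom(B,A) = 0 = Ext¹(B,A)`. -/
def ExcPair {Λ : Type} [Ring Λ] (A B : ModuleCat.{0} Λ) : Prop :=
  homZero B A ∧ ext1Zero B A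

/-- Hom-orthogonality of a pair of modules. -/
def HomOrth {Λ : Type} [Ring Λ] (A B : ModuleCat.{0} Λ) : Prop :=
  homZero A B ∧ homZero B A

/-- An hereditary ring: submodules of projective modules are projective. -/
def IsHereditary (Λ : Type) [Ring Λ] : Prop :=
  ∀ M : ModuleCat.{0} Λ, Module.Projective Λ M → ∀ N : Submodule Λ M, Module.Projective Λ N

/-- An indecomposable (nonzero) module: the only idempotent endomorphisms are `0` and `1`. -/
def Indec {Λ : Type} [Ring Λ] (M : ModuleCat.{0} Λ) : Prop :=
  ((0 : End M) ≠ 1) ∧ ∀ f : End M, f * f = f → f = 0 ∨ f = 1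

/-- Finite representation type: finitely many isomorphism classes of finite-dimensional
indecomposable modules. -/
def FiniteRepType (Λ : Type) [Ring Λ] : Prop :=
  ∃ (N : ℕ) (rep : Fin N → ModuleCat.{0} Λ),
    ∀ M : ModuleCat.{0} Λ, Module.Finite Λ M → Indec M → ∃ i, Nonempty (M ≅ rep i)

open LinearMap

section Helpers
variable {Λ : Type} [Ring Λ]

theorem factor_thru {T B C : Type} [AddCommGroup T] [AddCommGroup B] [AddCommGroup C]
    [Module Λ T] [Module Λ B] [Module Λ C]
    (p : T →ₗ[Λ] B) (hp : Function.Surjective p) (g : T →ₗ[Λ] C)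
    (h : ker p ≤ ker g) : ∃ e : B →ₗ[Λ] C, g = e ∘ₗ p := by
  let pbar : (T ⧸ ker p) →ₗ[Λ] B := (ker p).liftQ p le_rfl
  have hbij : Function.Bijective pbar := by
    constructor
    · rw [← LinearMap.ker_eq_bot, Submodule.ker_liftQ_eq_bot _ _ _ le_rfl]
    · intro b; obtain ⟨t, rfl⟩ := hp b; exact ⟨Submodule.Quotient.mk t, rfl⟩
  let E := LinearEquiv.ofBijective pbar hbij
  refine ⟨((ker p).liftQ g h) ∘ₗ E.symm.toLinearMap, ?_⟩
  ext t
  have h1 : E.symm (p t) = Submodule.Quotient.mk t := by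
    apply E.injective
    rw [LinearEquiv.apply_symm_apply]
    rfl
  simp [h1]

theorem factor_left {T X Q : Type} [AddCommGroup T] [AddCommGroup X] [AddCommGroup Q]
    [Module Λ T] [Module Λ X] [Module Λ Q]
    (i : T →ₗ[Λ] Q) (hi : Function.Injective i) (u : X →ₗ[Λ] Q)
    (h : range u ≤ range i) : ∃ w : X →ₗ[Λ] T, u = i ∘ₗ w := by
  let E := LinearEquiv.ofInjective i hi
  refine ⟨E.symm.toLinearMap ∘ₗ (u.codRestrict (range i) (fun x => h ⟨x, rfl⟩)), ?_⟩
  ext x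
  have key : ∀ y : range i, i (E.symm y) = (y : Q) := by
    intro y
    conv_rhs => rw [← LinearEquiv.apply_symm_apply E y]
    rw [LinearEquiv.ofInjective_apply]
  simp only [LinearMap.coe_comp, Function.comp_apply, LinearEquiv.coe_coe]
  rw [key]
  rfl

theorem cancel_surj {T B C : Type} [AddCommGroup T] [AddCommGroup B] [AddCommGroup C]
    [Module Λ T] [Module Λ B] [Module Λ C]
    (p : T →ₗ[Λ] B) (hp : Function.Surjective p) (e e' : B →ₗ[Λ] C)
    (h : e ∘ₗ p = e' ∘ₗ p) : e = e' := by
  ext b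
  obtain ⟨t, rfl⟩ := hp b
  exact congrArg (fun f => f t) h

theorem cancel_inj {T B C : Type} [AddCommGroup T] [AddCommGroup B] [AddCommGroup C]
    [Module Λ T] [Module Λ B] [Module Λ C]
    (i : B →ₗ[Λ] C) (hi : Function.Injective i) (w w' : T →ₗ[Λ] B)
    (h : i ∘ₗ w = i ∘ₗ w') : w = w' := by
  ext t
  exact hi (congrArg (fun f => f t) h)

lemma idem_cases {X : ModuleCat.{0} Λ} (hdiv : ∀ f : End X, f ≠ 0 → IsUnit f)
    (f : End X) (hf : f * f = f) : f = 0 ∨ f = 1 := by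
  by_cases h : f = 0
  · exact Or.inl h
  · right
    obtain ⟨u, hu⟩ := hdiv f h
    have h1 : f * (f - 1) = 0 := by rw [mul_sub, hf, mul_one, sub_self]
    have h2 : (↑u⁻¹ : End X) * (f * (f - 1)) = f - 1 := by
      rw [← mul_assoc, ← hu, u.inv_mul, one_mul]
    rw [h1, mul_zero] at h2
    rw [← sub_eq_zero]
    exact h2.symm

lemma indec_of_exceptional {X : ModuleCat.{0} Λ} (h : IsExceptional X) : Indec X :=
  ⟨h.2.2.1, fun f hf => idem_cases h.2.2.2 f hf⟩

end Helpers

set_option linter.unusedSectionVars false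
section KD
variable (K : Type) [Field K] {Λ : Type} [Ring Λ] [Algebra K Λ] [FiniteDimensional K Λ]

/-- Transport a `Λ`-linear map to a `K`-linear map between restricted scalars. -/
def rsMap {X Y : Type} [AddCommGroup X] [Module Λ X] [AddCommGroup Y] [Module Λ Y]
    (f : X →ₗ[Λ] Y) : RestrictScalars K Λ X →ₗ[K] RestrictScalars K Λ Y where
  toFun := fun x => (RestrictScalars.addEquiv K Λ Y).symm (f (RestrictScalars.addEquiv K Λ X x))
  map_add' := by intro x y; simp
  map_smul' := by
    intro k x
    simp only [RingHom.id_apply]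
    rw [RestrictScalars.addEquiv_map_smul, map_smul,
      RestrictScalars.addEquiv_symm_map_algebraMap_smul]

lemma rsMap_surj {X Y : Type} [AddCommGroup X] [Module Λ X] [AddCommGroup Y] [Module Λ Y]
    (f : X →ₗ[Λ] Y) (hf : Function.Surjective f) : Function.Surjective (rsMap K f) := by
  intro y
  obtain ⟨x, hx⟩ := hf (RestrictScalars.addEquiv K Λ Y y)
  exact ⟨(RestrictScalars.addEquiv K Λ X).symm x, by simp [rsMap, hx]⟩

lemma rsMap_inj {X Y : Type} [AddCommGroup X] [Module Λ X] [AddCommGroup Y] [Module Λ Y]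
    (f : X →ₗ[Λ] Y) (hf : Function.Injective f) : Function.Injective (rsMap K f) := by
  intro x y hxy
  simp only [rsMap, LinearMap.coe_mk, AddHom.coe_mk, EmbeddingLike.apply_eq_iff_eq] at hxy
  exact (RestrictScalars.addEquiv K Λ X).injective (hf hxy)

noncomputable def kd (X : ModuleCat.{0} Λ) : ℕ := Module.finrank K (RestrictScalars K Λ X)

lemma kd_finite (X : ModuleCat.{0} Λ) (h : Module.Finite Λ X) :
    Module.Finite K (RestrictScalars K Λ X) := by
  letI : Module Λ (RestrictScalars K Λ X) := RestrictScalars.moduleOrig K Λ X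
  haveI : Module.Finite Λ (RestrictScalars K Λ X) := h
  exact Module.Finite.trans Λ (RestrictScalars K Λ X)

lemma kd_pos (X : ModuleCat.{0} Λ) (h : Module.Finite Λ X) (hn : Nontrivial X) :
    0 < kd K X := by
  haveI := kd_finite K X h
  haveI : Nontrivial (RestrictScalars K Λ X) := hn
  haveI : Module.Free K (RestrictScalars K Λ X) :=
    @Module.Free.of_divisionRing K (RestrictScalars K Λ X) _ _ (RestrictScalars.module K Λ X)
  exact (Module.finrank_pos_iff_of_free K (RestrictScalars K Λ X)).mpr ‹_›

lemma kd_add (Q T B : ModuleCat.{0} Λ) (hQ : Module.Finite Λ Q)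
    (i : T →ₗ[Λ] Q) (p : Q →ₗ[Λ] B) (hi : Function.Injective i)
    (hp : Function.Surjective p) (hex : LinearMap.range i = LinearMap.ker p) :
    kd K Q = kd K T + kd K B := by
  haveI := kd_finite K Q hQ
  have h1 := @LinearMap.finrank_range_add_finrank_ker K (RestrictScalars K Λ Q) _ _
    (RestrictScalars.module K Λ Q) _ _ (RestrictScalars.module K Λ B) ‹_› (rsMap K p)
  have hrange : LinearMap.range (rsMap K p) = ⊤ := LinearMap.range_eq_top.mpr (rsMap_surj K p hp)
  have hker : LinearMap.ker (rsMap K p) = LinearMap.range (rsMap K i) := by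
    ext x
    simp only [LinearMap.mem_ker, LinearMap.mem_range]
    constructor
    · intro hx
      have hx' : x ∈ LinearMap.ker p := hx
      rw [← hex] at hx'
      obtain ⟨t, ht⟩ := hx'
      exact ⟨t, ht⟩
    · rintro ⟨t, rfl⟩
      have : i t ∈ LinearMap.ker p := by rw [← hex]; exact ⟨t, rfl⟩
      exact this
  have h1' : Module.finrank K ↥(LinearMap.range (rsMap K p))
      + Module.finrank K ↥(LinearMap.ker (rsMap K p)) = Module.finrank K (RestrictScalars K Λ Q) := h1
  rw [hrange, hker] at h1'
  have h2 : Module.finrank K ↥(LinearMap.range (rsMap K i))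
      = Module.finrank K (RestrictScalars K Λ T) :=
    (LinearEquiv.finrank_eq (LinearEquiv.ofInjective (rsMap K i) (rsMap_inj K i hi))).symm
  rw [h2, finrank_top] at h1'
  unfold kd
  omega

end KD


section Step
variable {Λ : Type} [Ring Λ]

theorem step {n : ℕ} (hered : IsHereditary Λ) (M : Fin n → ModuleCat.{0} Λ)
    (hexc : ∀ i, IsExceptional (M i)) (horth : ∀ i j, i ≠ j → HomOrth (M i) (M j))
    (a b : Fin n) (hab : a ≠ b) (hedge : ¬ ext1Zero (M b) (M a))
    (T : ModuleCat.{0} Λ) (hTfin : Module.Finite Λ T) (hTind : Indec T)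
    (p : T ⟶ M a) (hp : Function.Surjective p)
    (inv1 : ∀ v, v ≠ a → ∀ g : T ⟶ M v, g = 0)
    (inv2 : ∀ h : T ⟶ M a, ∃ e : M a ⟶ M a,
      h.hom = e.hom ∘ₗ p.hom) :
    ∃ (Q : ModuleCat.{0} Λ) (ι : T ⟶ Q) (pQ : Q ⟶ M b),
      Module.Finite Λ Q ∧ Indec Q ∧ Function.Surjective pQ ∧ Function.Injective ι ∧
      LinearMap.range ι.hom = LinearMap.ker pQ.hom ∧
      (∀ v, v ≠ b → ∀ g : Q ⟶ M v, g = 0) ∧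
      (∀ h : Q ⟶ M b, ∃ e : M b ⟶ M b,
        h.hom = e.hom ∘ₗ pQ.hom) := by
  classical
  unfold ext1Zero at hedge
  push_neg at hedge
  obtain ⟨W, iW, qW, hiW, hqW, hexW, hnos⟩ := hedge
  -- projective presentation of M b
  haveI : Module.Finite Λ (M b) := (hexc b).1
  obtain ⟨nP, π, hπ⟩ := Module.Finite.exists_fin' Λ (M b)
  haveI hPproj : Module.Projective Λ (Fin nP → Λ) := inferInstance
  set Kd : Submodule Λ (Fin nP → Λ) := LinearMap.ker π with hKdDef
  haveI hKproj : Module.Projective Λ Kd := hered (ModuleCat.of Λ (Fin nP → Λ)) hPproj Kd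
  -- lift π along qW
  obtain ⟨φ, hφ⟩ := Module.projective_lifting_property qW.hom π hqW
  -- the map ψ : Kd → M a with iW ∘ ψ = φ|Kd
  have hmem : ∀ κ : Kd, φ (κ : Fin nP → Λ) ∈ LinearMap.range iW.hom := by
    intro κ
    rw [hexW, LinearMap.mem_ker]
    have h := LinearMap.congr_fun hφ (κ : Fin nP → Λ)
    simp only [LinearMap.coe_comp, Function.comp_apply] at h
    rw [h]
    exact κ.2
  let EW := LinearEquiv.ofInjective iW.hom hiW
  have keyW : ∀ y : LinearMap.range iW.hom, iW (EW.symm y) = (y : W) := by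
    intro y
    conv_rhs => rw [← LinearEquiv.apply_symm_apply EW y]
    rw [LinearEquiv.ofInjective_apply]
  let ψ : Kd →ₗ[Λ] (M a) :=
    EW.symm.toLinearMap ∘ₗ ((φ ∘ₗ Kd.subtype).codRestrict _ (fun κ => hmem κ))
  have hψ : ∀ κ : Kd, iW (ψ κ) = φ (κ : Fin nP → Λ) := by
    intro κ
    show iW (EW.symm _) = _
    rw [keyW]
    rfl
  -- lift ψ along p
  obtain ⟨χ, hχ⟩ := Module.projective_lifting_property p.hom ψ hp
  -- the pushout
  set U : Submodule Λ (T × (Fin nP → Λ)) :=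
    LinearMap.range ((χ.prod (-Kd.subtype)) : Kd →ₗ[Λ] T × (Fin nP → Λ)) with hUdef
  let Qc := (T × (Fin nP → Λ)) ⧸ U
  let QM : ModuleCat.{0} Λ := ModuleCat.of Λ Qc
  let mkq : (T × (Fin nP → Λ)) →ₗ[Λ] Qc := U.mkQ
  let ιl : T →ₗ[Λ] Qc := mkq ∘ₗ LinearMap.inl Λ T (Fin nP → Λ)
  have hUle : U ≤ LinearMap.ker (π ∘ₗ (LinearMap.snd Λ T (Fin nP → Λ))) := by
    rintro ⟨t, x⟩ ⟨κ, hκ⟩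
    rw [LinearMap.mem_ker]
    have hx : x = -(κ : Fin nP → Λ) := (congrArg Prod.snd hκ).symm
    show π x = 0
    rw [hx, map_neg, neg_eq_zero]
    exact κ.2
  let pQl : Qc →ₗ[Λ] (M b) := U.liftQ (π ∘ₗ (LinearMap.snd Λ T (Fin nP → Λ))) hUle
  -- surjectivity of pQ
  have hpQsurj : Function.Surjective pQl := by
    intro y
    obtain ⟨x, hx⟩ := hπ y
    exact ⟨mkq (0, x), hx⟩
  -- injectivity of ι
  have hιinj : Function.Injective ιl := by
    intro t t' h
    have h2 : ((t, 0) : T × (Fin nP → Λ)) - (t', 0) ∈ U := (Submodule.Quotient.eq U).mp h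
    obtain ⟨κ, hκ⟩ := h2
    rw [Prod.ext_iff] at hκ
    obtain ⟨hfst, hsnd⟩ := hκ
    simp only [LinearMap.prod_apply, LinearMap.neg_apply, Submodule.coe_subtype, Pi.prod,
      Prod.snd_sub, Prod.fst_sub, sub_zero, sub_self] at hfst hsnd
    have hκ0 : κ = 0 := Subtype.ext (neg_eq_zero.mp hsnd)
    rw [hκ0] at hfst
    have hfst' : χ 0 = t - t' := hfst
    rw [map_zero] at hfst'
    exact (sub_eq_zero.mp hfst'.symm)
  -- exactness
  have hpQι : ∀ t : T, pQl (ιl t) = 0 := by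
    intro t
    show π 0 = 0
    exact map_zero π
  have hexQ : LinearMap.range ιl = LinearMap.ker pQl := by
    apply le_antisymm
    · rintro _ ⟨t, rfl⟩
      exact hpQι t
    · intro x hx
      obtain ⟨⟨t, y⟩, rfl⟩ := U.mkQ_surjective x
      have hy : y ∈ Kd := by
        have : π y = 0 := hx
        exact this
      refine ⟨t + χ ⟨y, hy⟩, ?_⟩
      show U.mkQ (t + χ ⟨y, hy⟩, 0) = U.mkQ (t, y)
      rw [Submodule.mkQ_apply, Submodule.mkQ_apply, Submodule.Quotient.eq]
      refine ⟨⟨y, hy⟩, ?_⟩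
      simp [Prod.ext_iff]
  -- the comparison map α : Qc → W
  let β : (T × (Fin nP → Λ)) →ₗ[Λ] W :=
    LinearMap.coprod (iW.hom ∘ₗ p.hom) φ
  have hUβ : U ≤ LinearMap.ker β := by
    rintro _ ⟨κ, rfl⟩
    rw [LinearMap.mem_ker]
    show iW (p (χ κ)) + φ (-(κ : Fin nP → Λ)) = 0
    have h1 : p (χ κ) = ψ κ := congrArg (fun f => f κ) hχ
    rw [h1, hψ κ, map_neg, add_neg_cancel]
  let α : Qc →ₗ[Λ] W := U.liftQ β hUβ
  have hαι : ∀ t : T, α (ιl t) = iW (p t) := by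
    intro t
    show iW (p t) + φ 0 = iW (p t)
    rw [map_zero, add_zero]
  have hqα : qW.hom ∘ₗ α = pQl := by
    apply Submodule.linearMap_qext
    apply LinearMap.ext
    rintro ⟨t, x⟩
    show qW (iW (p t) + φ x) = π x
    have h1 : qW (iW (p t)) = 0 := by
      have : iW (p t) ∈ LinearMap.ker qW.hom := by
        rw [← hexW]; exact ⟨p t, rfl⟩
      exact this
    have h2 := LinearMap.congr_fun hφ x
    simp only [LinearMap.coe_comp, Function.comp_apply] at h2
    rw [map_add, h1, h2, zero_add]
  -- no section of pQ
  have hnosec : ∀ σ' : (M b) →ₗ[Λ] Qc, pQl ∘ₗ σ' ≠ LinearMap.id := by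
    intro σ' hσ'
    apply hnos (ModuleCat.ofHom (α ∘ₗ σ'))
    apply ModuleCat.hom_ext
    show qW.hom ∘ₗ (α ∘ₗ σ') = LinearMap.id
    rw [← LinearMap.comp_assoc, hqα]
    exact hσ'
  -- no retraction of ι
  have hnoretr : ∀ w : Qc →ₗ[Λ] T, w ∘ₗ ιl ≠ LinearMap.id := by
    intro w hw
    have hu : ∀ t : T, ((LinearMap.id - ιl ∘ₗ w : Qc →ₗ[Λ] Qc)) (ιl t) = 0 := by
      intro t
      show ιl t - ιl (w (ιl t)) = 0
      have h1 : w (ιl t) = t := LinearMap.congr_fun hw t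
      rw [h1, sub_self]
    have hker : LinearMap.ker pQl ≤ LinearMap.ker ((LinearMap.id - ιl ∘ₗ w : Qc →ₗ[Λ] Qc)) := by
      rw [← hexQ]; rintro _ ⟨t, rfl⟩; exact hu t
    obtain ⟨σ', hσ'⟩ := factor_thru pQl hpQsurj _ hker
    have hpu : pQl ∘ₗ ((LinearMap.id - ιl ∘ₗ w : Qc →ₗ[Λ] Qc)) = pQl := by
      apply LinearMap.ext; intro x
      show pQl (x - ιl (w x)) = pQl x
      rw [map_sub, hpQι (w x), sub_zero]
    rw [hσ'] at hpu
    have h2 : (pQl ∘ₗ σ') ∘ₗ pQl = LinearMap.id ∘ₗ pQl := by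
      rw [LinearMap.comp_assoc, hpu, LinearMap.id_comp]
    exact hnosec σ' (cancel_surj pQl hpQsurj _ _ h2)
  -- unit restriction contradiction
  have hunit : ∀ (g : Qc →ₗ[Λ] (M a)) (e : (M a) →ₗ[Λ] (M a)),
      g ∘ₗ ιl = e ∘ₗ p.hom → e ≠ 0 → False := by
    intro g e hge he
    obtain ⟨u, hu⟩ := (hexc a).2.2.2 (ModuleCat.ofHom e)
      (fun h => he (by simpa using congrArg ModuleCat.Hom.hom h))
    have hinv : (↑u⁻¹ : End (M a)).hom ∘ₗ e = LinearMap.id := by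
      have h := u.inv_mul
      rw [hu] at h
      exact congrArg ModuleCat.Hom.hom h
    have hrι : ((↑u⁻¹ : End (M a)).hom ∘ₗ g) ∘ₗ ιl = p.hom := by
      rw [LinearMap.comp_assoc, hge, ← LinearMap.comp_assoc, hinv, LinearMap.id_comp]
    set r : Qc →ₗ[Λ] (M a) := (↑u⁻¹ : End (M a)).hom ∘ₗ g with hrdef
    have hδι : ∀ t : T, (α - iW.hom ∘ₗ r) (ιl t) = 0 := by
      intro t
      show α (ιl t) - iW (r (ιl t)) = 0
      have h1 : r (ιl t) = p t := LinearMap.congr_fun hrι t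
      rw [hαι, h1, sub_self]
    have hkerδ : LinearMap.ker pQl ≤ LinearMap.ker (α - iW.hom ∘ₗ r) := by
      rw [← hexQ]; rintro _ ⟨t, rfl⟩; exact hδι t
    obtain ⟨σ, hσ⟩ := factor_thru pQl hpQsurj _ hkerδ
    have hqδ : qW.hom ∘ₗ (α - iW.hom ∘ₗ r) = pQl := by
      apply LinearMap.ext; intro x
      show qW (α x - iW (r x)) = pQl x
      have h1 : qW (α x) = pQl x := LinearMap.congr_fun hqα x
      have h2 : qW (iW (r x)) = 0 := by
        have : iW (r x) ∈ LinearMap.ker qW.hom := by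
          rw [← hexW]; exact ⟨r x, rfl⟩
        exact this
      rw [map_sub, h1, h2, sub_zero]
    have h3 : (qW.hom ∘ₗ σ) ∘ₗ pQl = LinearMap.id ∘ₗ pQl := by
      rw [LinearMap.comp_assoc, ← hσ, hqδ, LinearMap.id_comp]
    have hqσ : qW.hom ∘ₗ σ = LinearMap.id := cancel_surj pQl hpQsurj _ _ h3
    exact hnos (ModuleCat.ofHom σ) (ModuleCat.hom_ext hqσ)
  -- inv1'
  have inv1' : ∀ v, v ≠ b → ∀ g : QM ⟶ M v, g = 0 := by
    intro v hv g
    have hgι : g.hom ∘ₗ ιl = 0 := by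
      by_cases hva : v = a
      · subst hva
        obtain ⟨e, he⟩ := inv2 (ModuleCat.ofHom (g.hom ∘ₗ ιl))
        have he' : g.hom ∘ₗ ιl = e.hom ∘ₗ p.hom := he
        by_cases he0 : e = 0
        · rw [he', he0, ModuleCat.hom_zero, LinearMap.zero_comp]
        · exact (hunit g.hom e.hom he' (fun h => he0 (ModuleCat.hom_ext h))).elim
      · exact congrArg ModuleCat.Hom.hom (inv1 v hva (ModuleCat.ofHom (g.hom ∘ₗ ιl)))
    have hker : LinearMap.ker pQl ≤ LinearMap.ker g.hom := by
      rw [← hexQ]; rintro _ ⟨t, rfl⟩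
      exact LinearMap.congr_fun hgι t
    obtain ⟨g', hg'⟩ := factor_thru pQl hpQsurj _ hker
    have hg0 : g' = 0 := congrArg ModuleCat.Hom.hom ((horth b v (fun h => hv h.symm)).1 (ModuleCat.ofHom g'))
    apply ModuleCat.hom_ext
    show g.hom = 0
    rw [hg', hg0, LinearMap.zero_comp]
  -- inv2'
  have inv2' : ∀ h : QM ⟶ M b, ∃ e : M b ⟶ M b,
      h.hom = e.hom ∘ₗ pQl := by
    intro h
    have hhι : h.hom ∘ₗ ιl = 0 :=
      congrArg ModuleCat.Hom.hom (inv1 b (Ne.symm hab) (ModuleCat.ofHom (h.hom ∘ₗ ιl)))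
    have hker : LinearMap.ker pQl ≤ LinearMap.ker h.hom := by
      rw [← hexQ]; rintro _ ⟨t, rfl⟩
      exact LinearMap.congr_fun hhι t
    obtain ⟨e, he⟩ := factor_thru pQl hpQsurj _ hker
    exact ⟨ModuleCat.ofHom e, he⟩
  -- Q is finite
  haveI hQfin : Module.Finite Λ Qc := Module.Finite.of_surjective U.mkQ U.mkQ_surjective
  -- Q is indecomposable
  have hQind : Indec QM := by
    constructor
    · intro h01
      apply (hexc b).2.2.1
      apply ModuleCat.hom_ext
      apply LinearMap.ext
      intro y
      obtain ⟨x, rfl⟩ := hpQsurj y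
      have hx0 : x = (0 : Qc) := (LinearMap.congr_fun (congrArg ModuleCat.Hom.hom h01) x).symm
      show 0 = pQl x
      rw [hx0, map_zero]
    · intro f hf
      let fl : Qc →ₗ[Λ] Qc := f.hom
      have hff : fl ∘ₗ fl = fl := congrArg ModuleCat.Hom.hom hf
      have hpfι : pQl ∘ₗ (fl ∘ₗ ιl) = 0 := by
        have h := inv1 b (Ne.symm hab)
          (ModuleCat.ofHom (pQl ∘ₗ (fl ∘ₗ ιl)))
        exact congrArg ModuleCat.Hom.hom h
      have hrangef : LinearMap.range (fl ∘ₗ ιl) ≤ LinearMap.range ιl := by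
        rw [hexQ]; rintro _ ⟨t, rfl⟩
        exact LinearMap.congr_fun hpfι t
      obtain ⟨ft, hft⟩ := factor_left ιl hιinj _ hrangef
      have hftidem : ft ∘ₗ ft = ft := by
        apply cancel_inj ιl hιinj
        have e1 : ιl ∘ₗ (ft ∘ₗ ft) = (fl ∘ₗ fl) ∘ₗ ιl := by
          rw [← LinearMap.comp_assoc, ← hft, LinearMap.comp_assoc, ← hft,
            ← LinearMap.comp_assoc]
        rw [e1, hff, hft]
      have hkerpf : LinearMap.ker pQl ≤ LinearMap.ker (pQl ∘ₗ fl) := by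
        rw [← hexQ]; rintro _ ⟨t, rfl⟩
        have : pQl (fl (ιl t)) = 0 := LinearMap.congr_fun hpfι t
        exact this
      obtain ⟨fb, hfb⟩ := factor_thru pQl hpQsurj _ hkerpf
      have hfbidem : fb ∘ₗ fb = fb := by
        apply cancel_surj pQl hpQsurj
        have e1 : (fb ∘ₗ fb) ∘ₗ pQl = pQl ∘ₗ (fl ∘ₗ fl) := by
          rw [LinearMap.comp_assoc, ← hfb]
          rw [← LinearMap.comp_assoc, ← hfb, LinearMap.comp_assoc]
        rw [e1, hff, hfb]
      -- the two cases on the subquotient idempotents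
      have claimY : ∀ g : Qc →ₗ[Λ] Qc, g ∘ₗ ιl = 0 → pQl ∘ₗ g = 0 → g ∘ₗ g = 0 := by
        intro g hgι hpg
        have hrg : LinearMap.range g ≤ LinearMap.range ιl := by
          rw [hexQ]; intro x hx
          obtain ⟨y, rfl⟩ := hx
          exact LinearMap.congr_fun hpg y
        obtain ⟨w, hw⟩ := factor_left ιl hιinj g hrg
        have hwι : w ∘ₗ ιl = 0 := by
          apply cancel_inj ιl hιinj
          rw [← LinearMap.comp_assoc, ← hw, hgι, LinearMap.comp_zero]
        have hkw : LinearMap.ker pQl ≤ LinearMap.ker w := by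
          rw [← hexQ]; rintro _ ⟨t, rfl⟩
          exact LinearMap.congr_fun hwι t
        obtain ⟨w', hw'⟩ := factor_thru pQl hpQsurj w hkw
        have hpι0 : pQl ∘ₗ ιl = 0 := by
          apply LinearMap.ext; intro t; exact hpQι t
        rw [hw, hw']
        calc (ιl ∘ₗ (w' ∘ₗ pQl)) ∘ₗ (ιl ∘ₗ (w' ∘ₗ pQl))
            = ιl ∘ₗ ((w' ∘ₗ (pQl ∘ₗ ιl)) ∘ₗ (w' ∘ₗ pQl)) := by
              simp only [LinearMap.comp_assoc]
          _ = 0 := by rw [hpι0, LinearMap.comp_zero, LinearMap.zero_comp,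
              LinearMap.comp_zero]
      have noSplit : ∀ g : Qc →ₗ[Λ] Qc, g ∘ₗ ιl = ιl → pQl ∘ₗ g = 0 → False := by
        intro g hgι hpg
        have hrg : LinearMap.range g ≤ LinearMap.range ιl := by
          rw [hexQ]; rintro _ ⟨y, rfl⟩
          exact LinearMap.congr_fun hpg y
        obtain ⟨w, hw⟩ := factor_left ιl hιinj g hrg
        have hwι : w ∘ₗ ιl = LinearMap.id := by
          apply cancel_inj ιl hιinj
          rw [← LinearMap.comp_assoc, ← hw, hgι, LinearMap.comp_id]
        exact hnoretr w hwι
      rcases hTind.2 (ModuleCat.ofHom ft) (congrArg ModuleCat.ofHom hftidem) with hft0 | hft1 <;>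
        rcases idem_cases (hexc b).2.2.2 (ModuleCat.ofHom fb) (congrArg ModuleCat.ofHom hfbidem) with hfb0 | hfb1
      · -- ft = 0, fb = 0 : f = 0
        left
        have h1 : fl ∘ₗ ιl = 0 := by
          rw [hft]
          have : (ft : T →ₗ[Λ] T) = 0 := congrArg ModuleCat.Hom.hom hft0
          rw [this, LinearMap.comp_zero]
        have h2 : pQl ∘ₗ fl = 0 := by
          rw [hfb]
          have : (fb : (M b) →ₗ[Λ] (M b)) = 0 := congrArg ModuleCat.Hom.hom hfb0
          rw [this, LinearMap.zero_comp]
        have := claimY fl h1 h2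
        apply ModuleCat.hom_ext
        show fl = 0
        rw [← hff]
        exact this
      · -- ft = 0, fb = 1 : no split via 1 - f
        exfalso
        apply noSplit (LinearMap.id - fl)
        · apply LinearMap.ext; intro t
          show ιl t - fl (ιl t) = ιl t
          have : fl (ιl t) = ιl (ft t) := LinearMap.congr_fun hft t
          rw [this]
          have : (ft : T →ₗ[Λ] T) = 0 := congrArg ModuleCat.Hom.hom hft0
          rw [this]
          show ιl t - ιl 0 = ιl t
          rw [map_zero, sub_zero]
        · apply LinearMap.ext; intro x
          show pQl (x - fl x) = 0
          have h1 : pQl (fl x) = fb (pQl x) := LinearMap.congr_fun hfb x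
          have h2 : (fb : (M b) →ₗ[Λ] (M b)) = LinearMap.id := congrArg ModuleCat.Hom.hom hfb1
          rw [map_sub, h1, h2]
          show pQl x - pQl x = 0
          rw [sub_self]
      · -- ft = 1, fb = 0 : no split via f
        exfalso
        apply noSplit fl
        · rw [hft]
          have : (ft : T →ₗ[Λ] T) = LinearMap.id := congrArg ModuleCat.Hom.hom hft1
          rw [this, LinearMap.comp_id]
        · rw [hfb]
          have : (fb : (M b) →ₗ[Λ] (M b)) = 0 := congrArg ModuleCat.Hom.hom hfb0
          rw [this, LinearMap.zero_comp]
      · -- ft = 1, fb = 1 : f = 1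
        right
        have h1 : (LinearMap.id - fl) ∘ₗ ιl = 0 := by
          apply LinearMap.ext; intro t
          show ιl t - fl (ιl t) = 0
          have h3 : fl (ιl t) = ιl (ft t) := LinearMap.congr_fun hft t
          have h4 : (ft : T →ₗ[Λ] T) = LinearMap.id := congrArg ModuleCat.Hom.hom hft1
          rw [h3, h4]
          show ιl t - ιl t = 0
          rw [sub_self]
        have h2 : pQl ∘ₗ (LinearMap.id - fl) = 0 := by
          apply LinearMap.ext; intro x
          show pQl (x - fl x) = 0
          have h3 : pQl (fl x) = fb (pQl x) := LinearMap.congr_fun hfb x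
          have h4 : (fb : (M b) →ₗ[Λ] (M b)) = LinearMap.id := congrArg ModuleCat.Hom.hom hfb1
          rw [map_sub, h3, h4]
          show pQl x - pQl x = 0
          rw [sub_self]
        have h5 := claimY _ h1 h2
        have h6 : (LinearMap.id - fl) ∘ₗ (LinearMap.id - fl)
            = LinearMap.id - fl := by
          apply LinearMap.ext; intro x
          show (x - fl x) - fl (x - fl x) = x - fl x
          have : fl (x - fl x) = fl x - fl (fl x) := by rw [map_sub]
          rw [this]
          have hffx : fl (fl x) = fl x := LinearMap.congr_fun hff x
          rw [hffx, sub_self, sub_zero]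
        rw [h6] at h5
        apply ModuleCat.hom_ext
        show fl = LinearMap.id
        have : LinearMap.id - fl = 0 := h5
        rw [← sub_eq_zero]
        rw [← neg_sub]
        rw [this]
        rw [neg_zero]
  exact ⟨QM, ModuleCat.ofHom ιl, ModuleCat.ofHom pQl, hQfin, hQind, hpQsurj, hιinj, hexQ, inv1', inv2'⟩

end Step

structure TowerStep {Λ : Type} [Ring Λ] {n : ℕ} (M : Fin n → ModuleCat.{0} Λ) (v : Fin n) where
  T : ModuleCat.{0} Λ
  p : T ⟶ M v
  fin : Module.Finite Λ T
  ind : Indec T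
  surj : Function.Surjective p
  inv1 : ∀ w, w ≠ v → ∀ g : T ⟶ M w, g = 0
  inv2 : ∀ h : T ⟶ M v, ∃ e : M v ⟶ M v,
    h.hom = e.hom ∘ₗ p.hom

section Tower
variable {Λ : Type} [Ring Λ]

noncomputable def towerStart {n : ℕ} (M : Fin n → ModuleCat.{0} Λ)
    (hexc : ∀ i, IsExceptional (M i)) (horth : ∀ i j, i ≠ j → HomOrth (M i) (M j))
    (v : Fin n) : TowerStep M v where
  T := M v
  p := 𝟙 (M v)
  fin := (hexc v).1
  ind := indec_of_exceptional (hexc v)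
  surj := fun x => ⟨x, rfl⟩
  inv1 := fun w hw g => (horth v w (fun h => hw h.symm)).1 g
  inv2 := fun h => ⟨h, (LinearMap.comp_id _).symm⟩

theorem towerNext {n : ℕ} (K : Type) [Field K] [Algebra K Λ] [FiniteDimensional K Λ]
    (hered : IsHereditary Λ) (M : Fin n → ModuleCat.{0} Λ)
    (hexc : ∀ i, IsExceptional (M i)) (horth : ∀ i j, i ≠ j → HomOrth (M i) (M j))
    (a b : Fin n) (hab : a ≠ b) (hedge : ¬ ext1Zero (M b) (M a))
    (s : TowerStep M a) :
    ∃ s' : TowerStep M b, kd K s'.T = kd K s.T + kd K (M b) := by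
  obtain ⟨Q, ι, pQ, hQfin, hQind, hpQ, hι, hexQ, hinv1, hinv2⟩ :=
    step hered M hexc horth a b hab hedge s.T s.fin s.ind s.p s.surj s.inv1 s.inv2
  refine ⟨⟨Q, pQ, hQfin, hQind, hpQ, hinv1, hinv2⟩, ?_⟩
  exact kd_add K Q s.T (M b) hQfin ι.hom pQ.hom hι hpQ hexQ

theorem towerBig {n : ℕ} (K : Type) [Field K] [Algebra K Λ] [FiniteDimensional K Λ]
    (hered : IsHereditary Λ) (M : Fin n → ModuleCat.{0} Λ)
    (hexc : ∀ i, IsExceptional (M i)) (horth : ∀ i j, i ≠ j → HomOrth (M i) (M j))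
    (c : ℕ → Fin n)
    (hedge : ∀ t, c t ≠ c (t + 1) ∧ ¬ ext1Zero (M (c (t + 1))) (M (c t))) :
    ∀ t : ℕ, ∃ s : TowerStep M (c t), t + 1 ≤ kd K s.T := by
  intro t
  induction t with
  | zero =>
    refine ⟨towerStart M hexc horth (c 0), ?_⟩
    have h1 : Nontrivial (M (c 0)) := by
      by_contra h
      rw [not_nontrivial_iff_subsingleton] at h
      exact (hexc (c 0)).2.2.1 (ModuleCat.hom_ext (LinearMap.ext fun x => Subsingleton.elim _ _))
    exact kd_pos K (M (c 0)) (hexc (c 0)).1 h1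
  | succ t ih =>
    obtain ⟨s, hs⟩ := ih
    obtain ⟨s', hs'⟩ := towerNext K hered M hexc horth (c t) (c (t + 1))
      (hedge t).1 (hedge t).2 s
    refine ⟨s', ?_⟩
    have h1 : Nontrivial (M (c (t + 1))) := by
      by_contra h
      rw [not_nontrivial_iff_subsingleton] at h
      exact (hexc (c (t + 1))).2.2.1 (ModuleCat.hom_ext (LinearMap.ext fun x => Subsingleton.elim _ _))
    have h2 := kd_pos K (M (c (t + 1))) (hexc (c (t + 1))).1 h1
    omega

theorem kd_iso (K : Type) [Field K] [Algebra K Λ] [FiniteDimensional K Λ]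
    {X Y : ModuleCat.{0} Λ} (e : X ≅ Y) : kd K X = kd K Y := by
  have hinj : Function.Injective e.hom.hom := by
    intro x y hxy
    have h1 : e.inv (e.hom x) = e.inv (e.hom y) := by rw [hxy]
    have h2 : ∀ z : X, e.inv (e.hom z) = z := fun z => by
      have := e.hom_inv_id
      exact LinearMap.congr_fun (congrArg (fun (f : X ⟶ X) => f.hom) this) z
    rwa [h2, h2] at h1
  have hsurj : Function.Surjective e.hom.hom := by
    intro y
    refine ⟨e.inv y, ?_⟩
    have := e.inv_hom_id
    exact LinearMap.congr_fun (congrArg (fun (f : Y ⟶ Y) => f.hom) this) y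
  exact LinearEquiv.finrank_eq (LinearEquiv.ofBijective (rsMap K e.hom.hom)
    ⟨rsMap_inj K _ hinj, rsMap_surj K _ hsurj⟩)

/-- The sink extraction lemma. -/
theorem exists_sink {n : ℕ} (K : Type) [Field K] [Algebra K Λ] [FiniteDimensional K Λ]
    (hered : IsHereditary Λ) (hfin : FiniteRepType Λ)
    (M : Fin n → ModuleCat.{0} Λ) (hn : Nonempty (Fin n))
    (hexc : ∀ i, IsExceptional (M i)) (horth : ∀ i j, i ≠ j → HomOrth (M i) (M j)) :
    ∃ m : Fin n, ∀ j, j ≠ m → ext1Zero (M m) (M j) := by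
  by_contra hcon
  push_neg at hcon
  classical
  choose nxt hnxt1 hnxt2 using hcon
  obtain ⟨v0⟩ := hn
  set d : ℕ → Fin n := fun t => nxt^[t] v0 with hd
  have hdsucc : ∀ t, d (t + 1) = nxt (d t) := by
    intro t
    simp only [hd, Function.iterate_succ_apply']
  obtain ⟨x, y, hxy, heq⟩ := Finite.exists_ne_map_eq_of_infinite d
  -- normalize to a < b
  obtain ⟨a, b, hab, hdab⟩ : ∃ a b : ℕ, a < b ∧ d a = d b := by
    rcases lt_or_gt_of_ne hxy with hlt | hlt
    · exact ⟨x, y, hlt, heq⟩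
    · exact ⟨y, x, hlt, heq.symm⟩
  set p : ℕ := b - a with hpdef
  have hp : 0 < p := by omega
  set c : ℕ → Fin n := fun t => d (b - 1 - (t % p)) with hcdef
  have key : ∀ t, c t = nxt (c (t + 1)) := by
    intro t
    set r := t % p with hrdef
    have hr : r < p := Nat.mod_lt _ hp
    by_cases hc : r + 1 < p
    · have e1 : (t + 1) % p = r + 1 := by
        have h2 : (t + 1) % p = (r + 1 % p) % p := by
          rw [Nat.add_mod, hrdef]
        rw [h2, Nat.mod_eq_of_lt (show 1 < p by omega),
          Nat.mod_eq_of_lt (show r + 1 < p from hc)]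
      show d (b - 1 - (t % p)) = nxt (d (b - 1 - ((t + 1) % p)))
      rw [e1, ← hrdef, ← hdsucc]
      congr 1
      omega
    · have hrp : r = p - 1 := by omega
      have e1 : (t + 1) % p = 0 := by
        have h2 : t = p * (t / p) + r := by
          rw [hrdef]; exact (Nat.div_add_mod t p).symm
        have h3 : t + 1 = p * (t / p + 1) := by
          have h4 : p * (t / p + 1) = p * (t / p) + p := by ring
          omega
        rw [h3, Nat.mul_mod_right]
      show d (b - 1 - (t % p)) = nxt (d (b - 1 - ((t + 1) % p)))
      rw [e1, ← hrdef, hrp]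
      have e2 : b - 1 - (p - 1) = a := by omega
      have e3 : b - 1 - 0 = b - 1 := by omega
      rw [e2, e3, ← hdsucc]
      have e4 : b - 1 + 1 = b := by omega
      rw [e4, hdab]
  have hedge : ∀ t, c t ≠ c (t + 1) ∧ ¬ ext1Zero (M (c (t + 1))) (M (c t)) := by
    intro t
    constructor
    · intro h
      apply hnxt1 (c (t + 1))
      rw [← key t, h]
    · rw [key t]
      exact hnxt2 (c (t + 1))
  -- build the tower and derive a contradiction with finite representation type
  obtain ⟨N, rep, hrep⟩ := hfin
  set B : ℕ := Finset.univ.sup (fun i : Fin N => kd K (rep i)) with hBdef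
  obtain ⟨s, hs⟩ := towerBig K hered M hexc horth c hedge B
  obtain ⟨i, ⟨iso⟩⟩ := hrep s.T s.fin s.ind
  have h1 : kd K s.T = kd K (rep i) := kd_iso K iso
  have h2 : kd K (rep i) ≤ B := by
    rw [hBdef]
    exact Finset.le_sup (f := fun j : Fin N => kd K (rep j)) (Finset.mem_univ i)
  omega

end Tower

section Main
variable {Λ : Type} [Ring Λ]

theorem mainPerm (K : Type) [Field K] [Algebra K Λ] [FiniteDimensional K Λ]
    (hered : IsHereditary Λ) (hfin : FiniteRepType Λ) :
    ∀ (k : ℕ) (M : Fin k → ModuleCat.{0} Λ),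
      (∀ i, IsExceptional (M i)) → (∀ i j, i ≠ j → HomOrth (M i) (M j)) →
      ∃ σ : Equiv.Perm (Fin k), ∀ i j : Fin k, i < j → ExcPair (M (σ i)) (M (σ j)) := by
  intro k
  induction k with
  | zero => exact fun M _ _ => ⟨1, fun i j _ => i.elim0⟩
  | succ k ih =>
    intro M hexc horth
    obtain ⟨m, hm⟩ := exists_sink K hered hfin M ⟨0⟩ hexc horth
    set M' : Fin k → ModuleCat.{0} Λ := fun t => M (m.succAbove t) with hM'
    have hexc' : ∀ i, IsExceptional (M' i) := fun i => hexc _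
    have hinj : Function.Injective m.succAbove := Fin.succAbove_right_injective
    have horth' : ∀ i j, i ≠ j → HomOrth (M' i) (M' j) := fun i j hij =>
      horth _ _ (fun h => hij (hinj h))
    obtain ⟨σ', hσ'⟩ := ih M' hexc' horth'
    set τ : Equiv.Perm (Fin (k + 1)) :=
      (finSuccEquivLast).trans ((Equiv.optionCongr σ').trans (finSuccEquiv' m).symm) with hτ
    have hτcast : ∀ j : Fin k, τ (Fin.castSucc j) = m.succAbove (σ' j) := by
      intro j
      show (finSuccEquiv' m).symm ((Equiv.optionCongr σ') (finSuccEquivLast (Fin.castSucc j)))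
        = m.succAbove (σ' j)
      rw [finSuccEquivLast_castSucc]
      show (finSuccEquiv' m).symm (some (σ' j)) = m.succAbove (σ' j)
      rw [finSuccEquiv'_symm_some]
    have hτlast : τ (Fin.last k) = m := by
      show (finSuccEquiv' m).symm ((Equiv.optionCongr σ') (finSuccEquivLast (Fin.last k))) = m
      rw [finSuccEquivLast_last]
      show (finSuccEquiv' m).symm none = m
      rw [finSuccEquiv'_symm_none]
    refine ⟨τ, ?_⟩
    intro i j hij
    by_cases hj : j = Fin.last k
    · subst hj
      have hi : i ≠ Fin.last k := ne_of_lt hij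
      obtain ⟨i', rfl⟩ := Fin.exists_castSucc_eq.mpr hi
      rw [hτcast, hτlast]
      have hne : m.succAbove (σ' i') ≠ m := Fin.succAbove_ne m (σ' i')
      exact ⟨(horth _ _ hne).2, hm _ hne⟩
    · have hi : i ≠ Fin.last k := by
        intro h
        subst h
        exact absurd hij (not_lt.mpr (Fin.le_last j))
      obtain ⟨i', rfl⟩ := Fin.exists_castSucc_eq.mpr hi
      obtain ⟨j', rfl⟩ := Fin.exists_castSucc_eq.mpr hj
      rw [hτcast, hτcast]
      exact hσ' i' j' (by rwa [Fin.castSucc_lt_castSucc_iff] at hij)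

end Main

/-- Over a finite-dimensional hereditary algebra of finite representation
type, pairwise Hom-orthogonal exceptional modules, any two of which form an exceptional pair
in at least one order, can be arranged into an exceptional sequence. -/
theorem stmt10 (K Λ : Type) [Field K] [Ring Λ] [Algebra K Λ] [FiniteDimensional K Λ]
    (hered : IsHereditary Λ) (hfin : FiniteRepType Λ)
    (k : ℕ) (M : Fin k → ModuleCat.{0} Λ)
    (hexc : ∀ i, IsExceptional (M i))
    (horth : ∀ i j, i ≠ j → HomOrth (M i) (M j))
    (hpair : ∀ i j, i ≠ j → ExcPair (M i) (M j) ∨ ExcPair (M j) (M i)) :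
    ∃ σ : Equiv.Perm (Fin k), ∀ i j : Fin k, i < j → ExcPair (M (σ i)) (M (σ j)) :=
  mainPerm K hered hfin k M hexc horth
end

section
/- Let Λ be a finite-dimensional hereditary algebra of finite representation type over a field. Let M_1, …, M_k and N_1, …, N_l be exceptional Λ-modules such that: the M_i are pairwise Hom-orthogonal and every pair among them forms an exceptional pair in at least one order; the N_j are pairwise Hom-orthogonal and every pair among them forms an exceptional pair in at least one order; and (M_i, N_j) is an exceptional pair for every i and j. Then there are permutations σ of {1,…,k} and τ of {1,…,l} such that (M_{σ(1)}, …, M_{σ(k)}, N_{τ(1)}, …, N_{τ(l)}) is an exceptional sequence, i.e., the modules can be arranged in an exceptional sequence with all of the N's to the right of all of the M's. -/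
open CategoryTheory

namespace Stmt11Aux
variable {Λ : Type} [Ring Λ]

lemma comp_apply' {X Y Z : ModuleCat.{0} Λ} (f : X ⟶ Y) (g : Y ⟶ Z) (x : X) :
    (f ≫ g) x = g (f x) := rfl

/-- Factorization through a surjection. -/
lemma factor {X Y Z : ModuleCat.{0} Λ} (p : X ⟶ Y) (g : X ⟶ Z)
    (hp : Function.Surjective p) (hker : LinearMap.ker p.hom ≤ LinearMap.ker g.hom) :
    ∃ h : Y ⟶ Z, p ≫ h = g := by
  let e := LinearMap.quotKerEquivOfSurjective p.hom hp
  refine ⟨ModuleCat.ofHom (((LinearMap.ker p.hom).liftQ g.hom hker).comp e.symm.toLinearMap), ?_⟩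
  apply ModuleCat.hom_ext; apply LinearMap.ext; intro x
  have h1 : e.symm (p x) = Submodule.Quotient.mk x := by
    apply e.injective
    simp only [LinearEquiv.apply_symm_apply]
    rfl
  show ((LinearMap.ker p.hom).liftQ g.hom hker) (e.symm (p x)) = g x
  rw [h1]
  rfl

/-- A retraction of the kernel inclusion yields a section of the projection. -/
lemma section_of_retraction {A B E : ModuleCat.{0} Λ} (i : B ⟶ E) (p : E ⟶ A)
    (hp : Function.Surjective p) (hex : LinearMap.range i.hom = LinearMap.ker p.hom)
    (r : E ⟶ B) (hr : i ≫ r = 𝟙 B) : ∃ s : A ⟶ E, s ≫ p = 𝟙 A := by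
  have hpi : ∀ b : B, p (i b) = 0 := by
    intro b
    have : i b ∈ LinearMap.ker p.hom := hex ▸ LinearMap.mem_range_self i.hom b
    exact this
  set q : E ⟶ E := 𝟙 E - r ≫ i with hq
  have hfac : ∃ s : A ⟶ E, p ≫ s = q := by
    apply factor p q hp
    intro x hx
    rcases (hex.symm ▸ hx : x ∈ LinearMap.range i.hom) with ⟨b, rfl⟩
    have : q (i b) = i b - i (r (i b)) := rfl
    have hri : r (i b) = b := congrArg (fun f => f.hom b) hr
    simp only [LinearMap.mem_ker]
    show q (i b) = 0
    rw [this, hri, sub_self]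
  rcases hfac with ⟨s, hs⟩
  refine ⟨s, ?_⟩
  apply ModuleCat.hom_ext; apply LinearMap.ext; intro a
  rcases hp a with ⟨x, rfl⟩
  have h1 : s (p x) = q x := congrArg (fun f => f.hom x) hs
  show p (s (p x)) = p x
  rw [h1]
  show p (x - i (r x)) = p x
  rw [map_sub, hpi, sub_zero]


/-- Given a surjection `π : X ↠ A` and an extension `0 → A → F → B → 0`, there is an
extension `0 → X → X' → B → 0` together with a map `Φ : X' → F` lifting it. -/
lemma step (hered : IsHereditary Λ)
    {X A B F : ModuleCat.{0} Λ} (hfX : Module.Finite Λ X) (hfB : Module.Finite Λ B)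
    (π : X ⟶ A) (hπ : Function.Surjective π)
    (iF : A ⟶ F) (pF : F ⟶ B) (hiF : Function.Injective iF) (hpF : Function.Surjective pF)
    (hexF : LinearMap.range iF.hom = LinearMap.ker pF.hom) :
    ∃ (X' : ModuleCat.{0} Λ) (ι' : X ⟶ X') (π' : X' ⟶ B) (Φ : X' ⟶ F),
      Module.Finite Λ X' ∧ Function.Injective ι' ∧ Function.Surjective π' ∧
      LinearMap.range ι'.hom = LinearMap.ker π'.hom ∧ ι' ≫ Φ = π ≫ iF ∧ Φ ≫ pF = π' := by
  classical
  -- a finite free presentation of B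
  obtain ⟨d, pP, hpP⟩ := Module.Finite.exists_fin' Λ B
  set P : ModuleCat.{0} Λ := ModuleCat.of Λ (Fin d → Λ) with hP
  have hPproj : Module.Projective Λ P := inferInstanceAs (Module.Projective Λ (Fin d → Λ))
  set Ω : Submodule Λ P := LinearMap.ker pP with hΩ
  have hΩproj : Module.Projective Λ Ω := hered P hPproj Ω
  -- lift the presentation along pF
  obtain ⟨h, hh⟩ := Module.projective_lifting_property pF.hom pP hpF
  -- h restricted to Ω lands in range iF
  have hmem : ∀ z : Ω, h (z : P) ∈ LinearMap.range iF.hom := by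
    intro z
    rw [hexF]
    have : pF (h (z : P)) = pP (z : P) := congrArg (fun f => f (z : P)) hh
    have hz : pP (z : P) = 0 := z.2
    simpa [LinearMap.mem_ker, this] using hz
  -- ω : Ω → A with iF ∘ ω = h|Ω
  let ω : Ω →ₗ[Λ] A :=
    { toFun := fun z => (hmem z).choose
      map_add' := by
        intro z w
        apply hiF
        rw [(hmem (z + w)).choose_spec, map_add, (hmem z).choose_spec, (hmem w).choose_spec]
        simp
      map_smul' := by
        intro c z
        apply hiF
        rw [(hmem (c • z)).choose_spec, map_smul, (hmem z).choose_spec]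
        simp }
  have hω : ∀ z : Ω, iF (ω z) = h (z : P) := fun z => (hmem z).choose_spec
  -- lift ω along π
  obtain ⟨ωt, hωt⟩ := Module.projective_lifting_property π.hom ω hπ
  have hωt' : ∀ z : Ω, π (ωt z) = ω z := fun z => congrArg (fun f => f z) hωt
  -- the pushout module
  set w : Ω →ₗ[Λ] (X × (Fin d → Λ)) := LinearMap.prod ωt (-(Ω.subtype)) with hw
  set W : Submodule Λ (X × (Fin d → Λ)) := LinearMap.range w with hW
  set X' : ModuleCat.{0} Λ := ModuleCat.of Λ ((X × (Fin d → Λ)) ⧸ W) with hX'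
  set mk : (X × (Fin d → Λ)) →ₗ[Λ] ((X × (Fin d → Λ)) ⧸ W) := W.mkQ with hmk
  -- ι'
  set ι' : X ⟶ X' := ModuleCat.ofHom (mk.comp (LinearMap.inl Λ X (Fin d → Λ))) with hι'
  -- π' : kills W
  have hπ'ker : W ≤ LinearMap.ker (pP.comp (LinearMap.snd Λ X (Fin d → Λ))) := by
    rintro _ ⟨z, rfl⟩
    simp only [LinearMap.mem_ker, LinearMap.comp_apply]
    show pP (-(z : P)) = 0
    rw [map_neg]
    have : pP (z : P) = 0 := z.2
    rw [this, neg_zero]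
  set π' : X' ⟶ B := ModuleCat.ofHom (W.liftQ (pP.comp (LinearMap.snd Λ X (Fin d → Λ))) hπ'ker)
    with hπ'
  -- Φ : kills W
  set φ0 : (X × (Fin d → Λ)) →ₗ[Λ] F :=
    (iF.hom.comp (π.hom.comp (LinearMap.fst Λ X (Fin d → Λ)))) +
      (h.comp (LinearMap.snd Λ X (Fin d → Λ))) with hφ0
  have hΦker : W ≤ LinearMap.ker φ0 := by
    rintro _ ⟨z, rfl⟩
    simp only [LinearMap.mem_ker]
    show iF (π (ωt z)) + h (-(z : P)) = 0
    rw [hωt' z, hω z, map_neg, add_neg_cancel]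
  set Φ : X' ⟶ F := ModuleCat.ofHom (W.liftQ φ0 hΦker) with hΦ
  refine ⟨X', ι', π', Φ, ?_, ?_, ?_, ?_, ?_, ?_⟩
  · -- finiteness
    have h1 : Module.Finite Λ (X × (Fin d → Λ)) := by
      have : Module.Finite Λ (Fin d → Λ) := inferInstance
      exact Module.Finite.prod
    exact Module.Finite.of_surjective mk (Submodule.mkQ_surjective W)
  · -- ι' injective
    intro x y hxy
    have h0 : mk (x - y, 0) = 0 := by
      have h1 : mk (x, 0) = mk (y, 0) := hxy
      have h2 : mk ((x, 0) - (y, 0)) = 0 := by rw [map_sub, h1, sub_self]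
      have h3 : ((x, 0) - (y, 0) : X × (Fin d → Λ)) = (x - y, 0) := by
        ext <;> simp
      rwa [h3] at h2
    have hW' : ((x - y, 0) : X × (Fin d → Λ)) ∈ W := (Submodule.Quotient.mk_eq_zero W).1 h0
    rcases hW' with ⟨z, hz⟩
    have hz2 : -(z : P) = 0 := congrArg Prod.snd hz
    have hz0 : z = 0 := by
      have : (z : P) = 0 := by simpa using hz2
      exact Subtype.ext this
    have hz1 : ωt z = x - y := congrArg Prod.fst hz
    rw [hz0, map_zero] at hz1
    exact sub_eq_zero.1 hz1.symm
  · -- π' surjective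
    intro b
    rcases hpP b with ⟨q, hq⟩
    exact ⟨mk (0, q), hq⟩
  · -- exactness
    apply le_antisymm
    · rintro _ ⟨x, rfl⟩
      show π' (ι' x) = 0
      show pP 0 = 0
      simp
    · rintro x' hx'
      obtain ⟨⟨x, q⟩, rfl⟩ := Submodule.mkQ_surjective W x'
      have hq0 : pP q = 0 := hx'
      refine ⟨x + ωt ⟨q, hq0⟩, ?_⟩
      show mk (x + ωt ⟨q, hq0⟩, 0) = mk (x, q)
      rw [← sub_eq_zero, ← map_sub]
      refine (Submodule.Quotient.mk_eq_zero W).2 ⟨⟨q, hq0⟩, ?_⟩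
      show (ωt ⟨q, hq0⟩, -(q : Fin d → Λ)) = (x + ωt ⟨q, hq0⟩, 0) - (x, q)
      ext <;> simp
  · -- ι' ≫ Φ = π ≫ iF
    apply ModuleCat.hom_ext; apply LinearMap.ext; intro x
    show φ0 (x, 0) = iF (π x)
    show iF (π x) + h 0 = iF (π x)
    rw [map_zero, add_zero]
  · -- Φ ≫ pF = π'
    apply ModuleCat.hom_ext; apply LinearMap.ext; intro x'
    obtain ⟨⟨x, q⟩, rfl⟩ := Submodule.mkQ_surjective W x'
    show pF (φ0 (x, q)) = pP q
    show pF (iF (π x) + h q) = pP q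
    rw [map_add]
    have h1 : pF (iF (π x)) = 0 := by
      have : iF (π x) ∈ LinearMap.ker pF.hom := hexF ▸ LinearMap.mem_range_self iF.hom (π x)
      exact this
    have h2 : pF (h q) = pP q := congrArg (fun f => f q) hh
    rw [h1, h2, zero_add]


section Dim
attribute [local instance] RestrictScalars.moduleOrig

variable (K : Type) [Field K] [Algebra K Λ]

noncomputable def dimK (X : ModuleCat.{0} Λ) : ℕ := Module.finrank K (RestrictScalars K Λ X)

/-- restriction of scalars of a morphism -/
def resMap {X Y : ModuleCat.{0} Λ} (f : X ⟶ Y) :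
    RestrictScalars K Λ X →ₗ[K] RestrictScalars K Λ Y :=
  LinearMap.restrictScalars K (show RestrictScalars K Λ X →ₗ[Λ] RestrictScalars K Λ Y from f.hom)

@[simp] lemma resMap_apply {X Y : ModuleCat.{0} Λ} (f : X ⟶ Y) (x : X) :
    resMap K f x = f x := rfl

variable [FiniteDimensional K Λ]

lemma finiteRes (X : ModuleCat.{0} Λ) (h : Module.Finite Λ X) :
    Module.Finite K (RestrictScalars K Λ X) := by
  letI : Module.Finite Λ (RestrictScalars K Λ X) := h
  exact Module.Finite.trans Λ _

lemma dimK_pos (X : ModuleCat.{0} Λ) (h : Module.Finite Λ X) (hnt : Nontrivial X) :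
    0 < dimK K X := by
  letI iX : @Module K (RestrictScalars K Λ X) _ AddCommGroup.toAddCommMonoid :=
    RestrictScalars.module K Λ X
  haveI : @Module.Finite K (RestrictScalars K Λ X) _ AddCommGroup.toAddCommMonoid iX :=
    finiteRes K X h
  haveI : Nontrivial (RestrictScalars K Λ X) := hnt
  exact Module.finrank_pos (R := K) (M := RestrictScalars K Λ X)

lemma dimK_additive {X X' B : ModuleCat.{0} Λ} (hX' : Module.Finite Λ X')
    (ι' : X ⟶ X') (π' : X' ⟶ B) (hinj : Function.Injective ι') (hsurj : Function.Surjective π')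
    (hex : LinearMap.range ι'.hom = LinearMap.ker π'.hom) :
    dimK K X' = dimK K X + dimK K B := by
  letI iX' : @Module K (RestrictScalars K Λ X') _ AddCommGroup.toAddCommMonoid :=
    RestrictScalars.module K Λ X'
  letI iB : @Module K (RestrictScalars K Λ B) _ AddCommGroup.toAddCommMonoid :=
    RestrictScalars.module K Λ B
  haveI : @Module.Finite K (RestrictScalars K Λ X') _ AddCommGroup.toAddCommMonoid iX' :=
    finiteRes K X' hX'
  have hrn := LinearMap.finrank_range_add_finrank_ker (resMap K π')
  have hrange : LinearMap.range (resMap K π') = ⊤ := by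
    rw [LinearMap.range_eq_top]; exact hsurj
  have h1 : Module.finrank K (LinearMap.range (resMap K π')) = dimK K B := by
    rw [hrange]; exact (Submodule.topEquiv.finrank_eq)
  have hkerrange : LinearMap.range (resMap K ι') = LinearMap.ker (resMap K π') := by
    ext x
    constructor
    · rintro ⟨y, rfl⟩
      show π' (ι' y) = 0
      have : ι' y ∈ LinearMap.ker π'.hom := hex ▸ LinearMap.mem_range_self ι'.hom y
      exact this
    · intro hx
      have : x ∈ LinearMap.ker π'.hom := hx
      rw [← hex] at this
      rcases this with ⟨y, hy⟩
      exact ⟨y, hy⟩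
  have hinjK : Function.Injective (resMap K ι') := hinj
  have h2 : Module.finrank K (LinearMap.ker (resMap K π')) = dimK K X := by
    rw [← hkerrange]
    exact ((LinearEquiv.ofInjective (resMap K ι') hinjK).finrank_eq).symm
  rw [← h1, ← h2, Nat.add_comm]
  exact hrn.symm

omit [FiniteDimensional K Λ] in omit [FiniteDimensional K Λ] in
lemma dimK_iso {X Y : ModuleCat.{0} Λ} (e : X ≅ Y) : dimK K X = dimK K Y := by
  have hinj : Function.Injective (resMap K e.hom) := by
    intro a b hab
    have := congrArg (fun f => f.hom a) e.hom_inv_id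
    have h1 : e.inv (e.hom a) = a := congrArg (fun f => f.hom a) e.hom_inv_id
    have h2 : e.inv (e.hom b) = b := congrArg (fun f => f.hom b) e.hom_inv_id
    have : e.hom a = e.hom b := hab
    rw [← h1, ← h2, this]
  have hsurj : Function.Surjective (resMap K e.hom) := by
    intro y
    refine ⟨e.inv y, ?_⟩
    exact congrArg (fun f => f.hom y) e.inv_hom_id
  exact LinearEquiv.finrank_eq (LinearEquiv.ofBijective (resMap K e.hom) ⟨hinj, hsurj⟩)

end Dim

-- basic utilities
lemma epi_cancel {X Y Z : ModuleCat.{0} Λ} (p : X ⟶ Y) (hp : Function.Surjective p)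
    {α β : Y ⟶ Z} (h : p ≫ α = p ≫ β) : α = β := by
  apply ModuleCat.hom_ext; apply LinearMap.ext; intro y
  rcases hp y with ⟨x, rfl⟩
  exact congrArg (fun f => f.hom x) h

lemma mono_cancel {X Y Z : ModuleCat.{0} Λ} (i : Y ⟶ Z) (hi : Function.Injective i)
    {α β : X ⟶ Y} (h : α ≫ i = β ≫ i) : α = β := by
  apply ModuleCat.hom_ext; apply LinearMap.ext; intro x
  apply hi
  exact congrArg (fun f => f.hom x) h

lemma unit_inv {A : ModuleCat.{0} Λ} {u : End A} (hu : IsUnit u) :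
    ∃ v : End A, u ≫ v = 𝟙 A ∧ v ≫ u = 𝟙 A := by
  rcases hu with ⟨w, rfl⟩
  exact ⟨w.inv, w.inv_val, w.val_inv⟩

lemma idem_unit_eq_one {A : ModuleCat.{0} Λ} {u : End A} (hu : IsUnit u)
    (hid : u ≫ u = u) : u = 𝟙 A := by
  rcases unit_inv hu with ⟨v, huv, hvu⟩
  calc u = u ≫ 𝟙 A := (Category.comp_id u).symm
    _ = u ≫ (u ≫ v) := by rw [huv]
    _ = (u ≫ u) ≫ v := by rw [Category.assoc]
    _ = u ≫ v := by rw [hid]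
    _ = 𝟙 A := huv

section Tower

variable (K : Type) [Field K] [Algebra K Λ] [FiniteDimensional K Λ]
variable {k : ℕ} (M : Fin k → ModuleCat.{0} Λ) (c : ℕ → Fin k)

/-- The tower of iterated extensions along a walk. -/
structure Tow (n : ℕ) where
  X : ModuleCat.{0} Λ
  π : X ⟶ M (c n)
  fin : Module.Finite Λ X
  surj : Function.Surjective π
  T1 : ∀ j, j ≠ c n → ∀ f : X ⟶ M j, f = 0
  T2 : ∀ f : X ⟶ M (c n), ∃ u : M (c n) ⟶ M (c n), f = π ≫ u
  U : ∀ e : X ⟶ X, e ≫ e = e → e ≫ π = 0 → e = 0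
  dim : dimK K X = ∑ t ∈ Finset.range (n+1), dimK K (M (c t))

variable {M c}

lemma tower (hered : IsHereditary Λ)
    (hexc : ∀ i, IsExceptional (M i)) (horth : ∀ i j, i ≠ j → HomOrth (M i) (M j))
    (hne : ∀ n, c (n+1) ≠ c n)
    (hext : ∀ n, ∃ (F : ModuleCat.{0} Λ) (iF : M (c n) ⟶ F) (pF : F ⟶ M (c (n+1))),
      Function.Injective iF ∧ Function.Surjective pF ∧
      LinearMap.range iF.hom = LinearMap.ker pF.hom ∧ ∀ s, ¬ (s ≫ pF = 𝟙 (M (c (n+1))))) :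
    ∀ n, Nonempty (Tow K M c n) := by
  intro n
  induction n with
  | zero =>
    refine ⟨⟨M (c 0), 𝟙 (M (c 0)), (hexc (c 0)).1, Function.surjective_id, ?_, ?_, ?_, ?_⟩⟩
    · intro j hj f
      exact (horth (c 0) j (fun h => hj h.symm)).1 f
    · intro f
      exact ⟨f, (Category.id_comp f).symm⟩
    · intro e _ he
      rw [← Category.comp_id e]
      exact he
    · simp [Finset.sum_range_one]
  | succ n ih =>
    obtain ⟨t⟩ := ih
    obtain ⟨F, iF, pF, hiF, hpF, hexF, hnsplit⟩ := hext n
    obtain ⟨X', ι', π', Φ, hfin', hinj', hsurj', hex', hcomm, hΦp⟩ :=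
      step hered t.fin (hexc (c (n+1))).1 t.π t.surj iF pF hiF hpF hexF
    -- abbreviations
    have hιπ' : ι' ≫ π' = 0 := by
      apply ModuleCat.hom_ext; apply LinearMap.ext; intro x
      have : ι' x ∈ LinearMap.ker π'.hom := hex' ▸ LinearMap.mem_range_self ι'.hom x
      exact this
    -- factorization through π' for maps killed by ι'
    have factor' : ∀ {Z : ModuleCat.{0} Λ} (f : X' ⟶ Z), ι' ≫ f = 0 →
        ∃ t0 : M (c (n+1)) ⟶ Z, f = π' ≫ t0 := by
      intro Z f hf
      have hker : LinearMap.ker π'.hom ≤ LinearMap.ker f.hom := by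
        intro x' hx'
        rw [← hex'] at hx'
        rcases hx' with ⟨x, rfl⟩
        have : f (ι' x) = 0 := congrArg (fun g => g.hom x) hf
        exact this
      rcases factor π' f hsurj' hker with ⟨t0, ht0⟩
      exact ⟨t0, ht0.symm⟩
    -- the splitting contradiction
    have uContr : ∀ (f : X' ⟶ M (c n)) (u : End (M (c n))), IsUnit u →
        ι' ≫ f = t.π ≫ u → False := by
      intro f u hu hf
      -- Φ is surjective
      have hΦsurj : Function.Surjective Φ := by
        intro y
        rcases hsurj' (pF y) with ⟨x'0, hx'0⟩
        have h1 : pF (y - Φ x'0) = 0 := by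
          rw [map_sub, ← comp_apply' Φ pF, hΦp, hx'0, sub_self]
        have h2 : (y - Φ x'0) ∈ LinearMap.range iF.hom := hexF ▸ h1
        rcases h2 with ⟨a, ha⟩
        rcases t.surj a with ⟨x, rfl⟩
        refine ⟨x'0 + ι' x, ?_⟩
        rw [map_add, ← comp_apply' ι' Φ, hcomm, comp_apply', ha]
        abel
      -- ker Φ ≤ ker f
      have hkerΦ : LinearMap.ker Φ.hom ≤ LinearMap.ker f.hom := by
        intro x' hx'
        have hΦ0 : Φ x' = 0 := hx'
        have hπ'0 : π' x' = 0 := by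
          rw [← hΦp, comp_apply', hΦ0, map_zero]
        have : x' ∈ LinearMap.range ι'.hom := hex' ▸ hπ'0
        rcases this with ⟨x, rfl⟩
        have hπx : iF (t.π x) = 0 := by
          have := congrArg (fun g => g.hom x) hcomm
          simpa [comp_apply'] using this.symm.trans hΦ0
        have hπx0 : t.π x = 0 := by
          apply hiF
          rw [hπx, map_zero]
        show f (ι' x) = 0
        have h14 : f (ι' x) = u.hom (t.π x) :=
          congrArg (fun g => g.hom x) hf
        rw [h14, hπx0, map_zero]
      rcases factor Φ f hΦsurj hkerΦ with ⟨fb, hfb⟩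
      have h3 : iF ≫ fb = u := by
        apply epi_cancel t.π t.surj
        have : t.π ≫ iF ≫ fb = ι' ≫ Φ ≫ fb := by
          rw [← Category.assoc, ← hcomm, Category.assoc]
        rw [this, hfb, hf]
      rcases unit_inv hu with ⟨v, huv, _⟩
      have h4 : iF ≫ (fb ≫ v) = 𝟙 (M (c n)) := by
        rw [← Category.assoc, h3, huv]
      rcases section_of_retraction iF pF hpF hexF (fb ≫ v) h4 with ⟨s, hs⟩
      exact hnsplit s hs
    -- End of M (c n) : idempotents are 0 or units
    have hdiv : ∀ u : End (M (c n)), u ≫ u = u → u = 0 ∨ u = 𝟙 (M (c n)) := by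
      intro u hu
      by_cases h0 : u = 0
      · exact Or.inl h0
      · exact Or.inr (idem_unit_eq_one ((hexc (c n)).2.2.2 u h0) hu)
    refine ⟨⟨X', π', hfin', hsurj', ?_, ?_, ?_, ?_⟩⟩
    · -- T1
      intro j hj f
      by_cases hjc : j = c n
      · subst hjc
        obtain ⟨u, hu⟩ := t.T2 (ι' ≫ f)
        by_cases hu0 : u = 0
        · have h5 : ι' ≫ f = 0 := by rw [hu, hu0, Limits.comp_zero]
          rcases factor' f h5 with ⟨t0, ht0⟩
          have ht00 : t0 = 0 := (horth (c (n+1)) (c n) (hne n)).1 t0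
          rw [ht0, ht00, Limits.comp_zero]
        · exact absurd (uContr f u ((hexc (c n)).2.2.2 u hu0) hu) not_false
      · have h5 : ι' ≫ f = 0 := by rw [t.T1 j hjc (ι' ≫ f)]
        rcases factor' f h5 with ⟨t0, ht0⟩
        have ht00 : t0 = 0 := (horth (c (n+1)) j (fun h => hj h.symm)).1 t0
        rw [ht0, ht00, Limits.comp_zero]
    · -- T2
      intro f
      have h5 : ι' ≫ f = 0 := by rw [t.T1 (c (n+1)) (hne n) (ι' ≫ f)]
      exact factor' f h5
    · -- U
      intro e he hπ'e
      have hmem : ∀ x', e x' ∈ LinearMap.range ι'.hom := by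
        intro x'
        rw [hex']
        show π' (e x') = 0
        exact congrArg (fun g => g.hom x') hπ'e
      set eqv := LinearEquiv.ofInjective ι'.hom hinj' with heqv
      set g : X' ⟶ t.X := ModuleCat.ofHom (eqv.symm.toLinearMap.comp
        (LinearMap.codRestrict (LinearMap.range ι'.hom) e.hom hmem)) with hg
      have hgι : g ≫ ι' = e := by
        apply ModuleCat.hom_ext; apply LinearMap.ext; intro x'
        show ι' (eqv.symm ⟨e x', hmem x'⟩) = e x'
        have h6 := eqv.apply_symm_apply ⟨e x', hmem x'⟩
        have h7 : (eqv (eqv.symm ⟨e x', hmem x'⟩) : X') = ι' (eqv.symm ⟨e x', hmem x'⟩) := by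
          rw [heqv]
          rfl
        rw [h6] at h7
        exact h7.symm
      have hgig : g ≫ (ι' ≫ g) = g := by
        apply mono_cancel ι' hinj'
        have h8 : (g ≫ (ι' ≫ g)) ≫ ι' = (g ≫ ι') ≫ (g ≫ ι') := by
          simp only [Category.assoc]
        rw [h8, hgι, he, ← hgι]
      set e' : t.X ⟶ t.X := ι' ≫ g with he'
      have he'2 : e' ≫ e' = e' := by
        calc (ι' ≫ g) ≫ ι' ≫ g = ι' ≫ (g ≫ (ι' ≫ g)) := by simp only [Category.assoc]
          _ = ι' ≫ g := by rw [hgig]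
      obtain ⟨u, hu⟩ := t.T2 (e' ≫ t.π)
      have huu : u ≫ u = u := by
        apply epi_cancel t.π t.surj
        calc t.π ≫ u ≫ u = (t.π ≫ u) ≫ u := by simp only [Category.assoc]
          _ = (e' ≫ t.π) ≫ u := by rw [← hu]
          _ = e' ≫ (t.π ≫ u) := by simp only [Category.assoc]
          _ = e' ≫ (e' ≫ t.π) := by rw [← hu]
          _ = (e' ≫ e') ≫ t.π := by simp only [Category.assoc]
          _ = e' ≫ t.π := by rw [he'2]
          _ = t.π ≫ u := hu
      rcases hdiv u huu with hu0 | hu1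
      · -- e' ≫ π = 0, so e' = 0, so e = e ≫ e = 0
        have h9 : e' ≫ t.π = 0 := by rw [hu, hu0, Limits.comp_zero]
        have h10 : e' = 0 := t.U e' he'2 h9
        have h11 : ι' ≫ g = 0 := h10
        calc e = e ≫ e := he.symm
          _ = (g ≫ ι') ≫ (g ≫ ι') := by rw [hgι]
          _ = g ≫ (ι' ≫ g) ≫ ι' := by simp only [Category.assoc]
          _ = g ≫ 0 ≫ ι' := by rw [h11]
          _ = 0 := by rw [Limits.zero_comp, Limits.comp_zero]
      · -- u = 𝟙 leads to a splitting, contradiction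
        exfalso
        have hedem : (𝟙 t.X - e') ≫ (𝟙 t.X - e') = 𝟙 t.X - e' := by
          rw [Preadditive.sub_comp, Preadditive.comp_sub, Preadditive.comp_sub,
            Category.id_comp, Category.comp_id, he'2]
          abel
        have hzero : (𝟙 t.X - e') ≫ t.π = 0 := by
          rw [Preadditive.sub_comp, Category.id_comp, hu, hu1, Category.comp_id, sub_self]
        have h12 : 𝟙 t.X - e' = 0 := t.U _ hedem hzero
        have h13 : ι' ≫ g = 𝟙 t.X := (sub_eq_zero.1 h12).symm
        rcases section_of_retraction ι' π' hsurj' hex' g h13 with ⟨s, hs⟩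
        apply hnsplit (s ≫ Φ)
        rw [Category.assoc, hΦp]
        exact hs
    · -- dim
      rw [dimK_additive K hfin' ι' π' hinj' hsurj' hex', t.dim,
        Finset.sum_range_succ _ (n+1), Finset.sum_range_succ _ n]

end Tower


section Final
variable {k : ℕ} {M : Fin k → ModuleCat.{0} Λ} {c : ℕ → Fin k}

lemma no_walk (K : Type) [Field K] [Algebra K Λ] [FiniteDimensional K Λ] (hered : IsHereditary Λ) (hfin : FiniteRepType Λ)
    (hexc : ∀ i, IsExceptional (M i)) (horth : ∀ i j, i ≠ j → HomOrth (M i) (M j))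
    (hne : ∀ n, c (n+1) ≠ c n)
    (hext : ∀ n, ∃ (F : ModuleCat.{0} Λ) (iF : M (c n) ⟶ F) (pF : F ⟶ M (c (n+1))),
      Function.Injective iF ∧ Function.Surjective pF ∧
      LinearMap.range iF.hom = LinearMap.ker pF.hom ∧ ∀ s, ¬ (s ≫ pF = 𝟙 (M (c (n+1))))) :
    False := by
  classical
  obtain ⟨Nr, rep, hrep⟩ := hfin
  have ht := tower K hered hexc horth hne hext
  let T : ∀ n : ℕ, Tow K M c n := fun n => Classical.choice (ht n)
  have hMnt : ∀ i : Fin k, Nontrivial (M i) := by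
    intro i
    rcases subsingleton_or_nontrivial (M i) with hs | hnt
    · exact absurd (ModuleCat.hom_ext (LinearMap.ext fun x => Subsingleton.elim _ _)) (hexc i).2.2.1
    · exact hnt
  -- each tower module is indecomposable
  have hind : ∀ n, Indec ((T n).X) := by
    intro n
    constructor
    · intro h01
      have hπ0 : (T n).π = 0 := by
        have h1 : (𝟙 ((T n).X)) = (0 : End ((T n).X)) := h01.symm
        have h2 : (𝟙 ((T n).X)) ≫ (T n).π = (0 : End ((T n).X)) ≫ (T n).π := by rw [h1]
        rw [Category.id_comp] at h2
        rw [h2, Limits.zero_comp]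
      obtain ⟨a, b, hab⟩ := hMnt (c n)
      obtain ⟨x, hx⟩ := (T n).surj a
      obtain ⟨y, hy⟩ := (T n).surj b
      apply hab
      rw [← hx, ← hy, hπ0]
      rfl
    · intro f0 hf
      have hff : ∀ f' : (T n).X ⟶ (T n).X, f' = f0 → (f' ≫ f' = f' →
          (f' = 0 ∨ f' = 𝟙 ((T n).X))) → (f0 = 0 ∨ f0 = 1) := by
        intro f' hf' h
        rw [hf'] at h
        exact h (hf : f0 ≫ f0 = f0)
      apply hff f0 rfl
      intro hff'
      set f : (T n).X ⟶ (T n).X := f0 with hfdef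
      obtain ⟨u, hu⟩ := (T n).T2 (f ≫ (T n).π)
      have huu : u ≫ u = u := by
        apply epi_cancel (T n).π (T n).surj
        calc (T n).π ≫ u ≫ u = ((T n).π ≫ u) ≫ u := by simp only [Category.assoc]
          _ = (f ≫ (T n).π) ≫ u := by rw [← hu]
          _ = f ≫ ((T n).π ≫ u) := by simp only [Category.assoc]
          _ = f ≫ (f ≫ (T n).π) := by rw [← hu]
          _ = (f ≫ f) ≫ (T n).π := by simp only [Category.assoc]
          _ = f ≫ (T n).π := by rw [hff']
          _ = (T n).π ≫ u := hu
      by_cases hu0 : u = 0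
      · left
        apply (T n).U f hff'
        rw [hu, hu0, Limits.comp_zero]
      · right
        have hu1 : u = 𝟙 (M (c n)) := idem_unit_eq_one ((hexc (c n)).2.2.2 u hu0) huu
        have hedem : (𝟙 ((T n).X) - f) ≫ (𝟙 ((T n).X) - f) = 𝟙 ((T n).X) - f := by
          rw [Preadditive.sub_comp, Preadditive.comp_sub, Preadditive.comp_sub,
            Category.id_comp, Category.comp_id, hff']
          abel
        have hzero : (𝟙 ((T n).X) - f) ≫ (T n).π = 0 := by
          rw [Preadditive.sub_comp, Category.id_comp, hu, hu1, Category.comp_id, sub_self]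
        have h12 : 𝟙 ((T n).X) - f = 0 := (T n).U _ hedem hzero
        exact (sub_eq_zero.1 h12).symm
  -- dimensions are strictly monotone
  have hmono : StrictMono (fun n => dimK K ((T n).X)) := by
    apply strictMono_nat_of_lt_succ
    intro n
    show dimK K ((T n).X) < dimK K ((T (n+1)).X)
    rw [(T n).dim, (T (n+1)).dim, Finset.sum_range_succ _ (n+1)]
    have hp := dimK_pos K (M (c (n+1))) (hexc _).1 (hMnt _)
    omega
  -- pigeonhole
  have hsel : ∀ n : ℕ, ∃ i : Fin Nr, Nonempty ((T n).X ≅ rep i) :=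
    fun n => hrep _ (T n).fin (hind n)
  choose idx hiso using hsel
  have hnotinj : ¬ Function.Injective (fun n : Fin (Nr+1) => idx n) := by
    intro hinj
    have hcard := Fintype.card_le_of_injective _ hinj
    simp only [Fintype.card_fin] at hcard
    omega
  simp only [Function.Injective, not_forall] at hnotinj
  obtain ⟨a, b, hab, hne'⟩ := hnotinj
  apply hne'
  have hda : dimK K ((T a).X) = dimK K (rep (idx a)) := dimK_iso K (hiso (a : ℕ)).some
  have hdb : dimK K ((T b).X) = dimK K (rep (idx b)) := dimK_iso K (hiso (b : ℕ)).some
  have heq : dimK K ((T (a : ℕ)).X) = dimK K ((T (b : ℕ)).X) := by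
    rw [hda, hdb, hab]
  have := hmono.injective heq
  exact Fin.ext this

lemma wf_of_no_chain {α : Type} (r : α → α → Prop)
    (h : ∀ f : ℕ → α, ¬ ∀ n, r (f (n+1)) (f n)) : WellFounded r := by
  classical
  by_contra hw
  have h1 : ∃ a, ¬ Acc r a := by
    by_contra h2
    push_neg at h2
    exact hw ⟨fun a => h2 a⟩
  obtain ⟨a, ha⟩ := h1
  have step : ∀ x, ¬ Acc r x → ∃ y, r y x ∧ ¬ Acc r y := by
    intro x hx
    by_contra h3
    push_neg at h3
    exact hx (Acc.intro x h3)
  let g : ℕ → {x // ¬ Acc r x} := fun n =>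
    Nat.rec ⟨a, ha⟩ (fun _ p => ⟨(step p.1 p.2).choose, (step p.1 p.2).choose_spec.2⟩) n
  apply h (fun n => (g n).1)
  intro n
  exact (step (g n).1 (g n).2).choose_spec.1

lemma exists_perm (K : Type) [Field K] [Algebra K Λ] [FiniteDimensional K Λ] (hered : IsHereditary Λ) (hfin : FiniteRepType Λ)
    (hexc : ∀ i, IsExceptional (M i)) (horth : ∀ i j, i ≠ j → HomOrth (M i) (M j))
    (hpair : ∀ i j, i ≠ j → ExcPair (M i) (M j) ∨ ExcPair (M j) (M i)) :
    ∃ σ : Equiv.Perm (Fin k), ∀ i j : Fin k, i < j → ExcPair (M (σ i)) (M (σ j)) := by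
  classical
  set arc : Fin k → Fin k → Prop := fun i j => i ≠ j ∧ ¬ ExcPair (M i) (M j) with harc
  have hwf : WellFounded (Function.swap arc) := by
    apply wf_of_no_chain
    intro g hgchain
    have hg : ∀ n : ℕ, arc (g n) (g (n+1)) := hgchain
    apply no_walk K hered hfin hexc horth (c := fun n => g n)
    · intro n
      exact fun h => (hg n).1 h.symm
    · intro n
      have h2 := (hg n).2
      have hz : homZero (M (g (n+1))) (M (g n)) := (horth (g n) (g (n+1)) (hg n).1).2
      have hnext : ¬ ext1Zero (M (g (n+1))) (M (g n)) := fun he => h2 ⟨hz, he⟩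
      unfold ext1Zero at hnext
      push_neg at hnext
      exact hnext
  haveI : IsWellFounded (Fin k) (Function.swap arc) := ⟨hwf⟩
  set d : Fin k → Ordinal := IsWellFounded.rank (Function.swap arc) with hd
  have hrank : ∀ {x y}, arc x y → d y < d x := fun {x y} hxy =>
    IsWellFounded.rank_lt_of_rel (show Function.swap arc y x from hxy)
  refine ⟨Tuple.sort d, ?_⟩
  intro i j hij
  by_contra hnp
  have hneq : (Tuple.sort d) i ≠ (Tuple.sort d) j :=
    fun h => absurd ((Tuple.sort d).injective h) (ne_of_lt hij)
  have harc' : arc ((Tuple.sort d) i) ((Tuple.sort d) j) := ⟨hneq, hnp⟩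
  have h5 : d ((Tuple.sort d) j) < d ((Tuple.sort d) i) := hrank harc'
  have h6 : d ((Tuple.sort d) i) ≤ d ((Tuple.sort d) j) := Tuple.monotone_sort d (le_of_lt hij)
  exact absurd h5 (not_lt.2 h6)

end Final
end Stmt11Aux

/-- Over a finite-dimensional hereditary algebra of finite representation
type: given exceptional modules `M₁,…,M_k` and `N₁,…,N_l`, each family pairwise Hom-orthogonal
with every pair exceptional in at least one order, and with `(M_i, N_j)` an exceptional pair
for all `i, j`, the modules can be arranged into an exceptional sequence with all of the `N`'s
to the right of all of the `M`'s. -/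
theorem stmt11 (K Λ : Type) [Field K] [Ring Λ] [Algebra K Λ] [FiniteDimensional K Λ]
    (hered : IsHereditary Λ) (hfin : FiniteRepType Λ)
    (k l : ℕ) (M : Fin k → ModuleCat.{0} Λ) (N : Fin l → ModuleCat.{0} Λ)
    (hexcM : ∀ i, IsExceptional (M i)) (hexcN : ∀ j, IsExceptional (N j))
    (horthM : ∀ i j, i ≠ j → HomOrth (M i) (M j))
    (hpairM : ∀ i j, i ≠ j → ExcPair (M i) (M j) ∨ ExcPair (M j) (M i))
    (horthN : ∀ i j, i ≠ j → HomOrth (N i) (N j))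
    (hpairN : ∀ i j, i ≠ j → ExcPair (N i) (N j) ∨ ExcPair (N j) (N i))
    (hcross : ∀ i j, ExcPair (M i) (N j)) :
    ∃ (σ : Equiv.Perm (Fin k)) (τ : Equiv.Perm (Fin l)),
      (∀ i j : Fin k, i < j → ExcPair (M (σ i)) (M (σ j))) ∧
      (∀ i j : Fin l, i < j → ExcPair (N (τ i)) (N (τ j))) ∧
      (∀ (i : Fin k) (j : Fin l), ExcPair (M (σ i)) (N (τ j))) := by
  obtain ⟨σ, hσ⟩ := Stmt11Aux.exists_perm K hered hfin hexcM horthM hpairM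
  obtain ⟨τ, hτ⟩ := Stmt11Aux.exists_perm K hered hfin hexcN horthN hpairN
  exact ⟨σ, τ, hσ, hτ, fun i j => hcross (σ i) (τ j)⟩
end
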